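/- arXiv:2512.19034 — 2 statements merged into one kernel-verified Lean document; each statement's English description precedes it below -/
import Mathlib

section
/- Fix a finite set X of positive integers with |X| = m and an integer 0 ≤ k ≤ m with m − k even. Define a relation ⋖ on NCSP(X : k) by the two local moves described below. Then the transitive closure of ⋖ is a partial order on NCSP(X : k) with unique minimal element M_min(X : k), the matching pairing consecutive elements x₁,x₂; x₃,x₄; … ; x_{m−k−1},x_{m−k} (and their negatives) and making {±x_i} trivial for i > m − k. -/
/-- `M` is a noncrossing symmetric perfect matching on `X ⊔ (−X)`. -/
def IsNCSP (X : Finset ℤ) (M : Finset (Finset ℤ)) : Prop :=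
  (∀ b ∈ M, b.card = 2) ∧
  (∀ b ∈ M, ∀ x ∈ b, x ∈ X ∨ -x ∈ X) ∧
  (∀ x : ℤ, (x ∈ X ∨ -x ∈ X) → ∃! b : Finset ℤ, b ∈ M ∧ x ∈ b) ∧
  (∀ b ∈ M, b.image (fun x => -x) ∈ M) ∧
  ¬∃ a b c d : ℤ, a < b ∧ b < c ∧ c < d ∧
    ({a, c} : Finset ℤ) ∈ M ∧ ({b, d} : Finset ℤ) ∈ M

/-- The number of trivial blocks `{−x, x}` of `M`. -/
def trivCount (X : Finset ℤ) (M : Finset (Finset ℤ)) : ℕ :=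
  (X.filter (fun x => ({-x, x} : Finset ℤ) ∈ M)).card

/-- `a` and `b` are consecutive elements of `X` with `a < b`. -/
def ConsecIn (X : Finset ℤ) (a b : ℤ) : Prop :=
  a ∈ X ∧ b ∈ X ∧ a < b ∧ ∀ x ∈ X, ¬(a < x ∧ x < b)

/-- First covering move: replace blocks `{±a}`, `±{b, c}` (with `a, b`
consecutive in `X` and `b < c`) by `±{a, b}`, `{±c}`. -/
def Move1 (X : Finset ℤ) (M N : Finset (Finset ℤ)) : Prop :=
  ∃ a b c : ℤ, ConsecIn X a b ∧ c ∈ X ∧ b < c ∧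
    ({-a, a} : Finset ℤ) ∈ N ∧ ({b, c} : Finset ℤ) ∈ N ∧
    ({-b, -c} : Finset ℤ) ∈ N ∧
    M = (N \ {({-a, a} : Finset ℤ), {b, c}, {-b, -c}}) ∪
      {({a, b} : Finset ℤ), {-a, -b}, {-c, c}}

/-- Second covering move: replace blocks `±{a, q}`, `±{b, p}` (with `a, b`
consecutive in `X` and `b < p < q`) by `±{a, b}`, `±{p, q}`, provided no block
of `N` consists of two positive elements straddling `a`. -/
def Move2 (X : Finset ℤ) (M N : Finset (Finset ℤ)) : Prop :=
  ∃ a b p q : ℤ, ConsecIn X a b ∧ p ∈ X ∧ q ∈ X ∧ b < p ∧ p < q ∧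
    ({a, q} : Finset ℤ) ∈ N ∧ ({-a, -q} : Finset ℤ) ∈ N ∧
    ({b, p} : Finset ℤ) ∈ N ∧ ({-b, -p} : Finset ℤ) ∈ N ∧
    (¬∃ u v : ℤ, ({u, v} : Finset ℤ) ∈ N ∧ 0 < u ∧ u < a ∧ a < v) ∧
    M = (N \ {({a, q} : Finset ℤ), {-a, -q}, {b, p}, {-b, -p}}) ∪
      {({a, b} : Finset ℤ), {-a, -b}, {p, q}, {-p, -q}}

/-- The covering relation `M ⋖ N`. -/
def LessDot (X : Finset ℤ) (M N : Finset (Finset ℤ)) : Prop :=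
  Move1 X M N ∨ Move2 X M N

/-- Pair up consecutive entries of a list of positive integers, producing blocks
`{a, b}` and `{−a, −b}`. -/
def pairUp : List ℤ → Finset (Finset ℤ)
  | a :: b :: rest =>
    insert ({a, b} : Finset ℤ) (insert ({-a, -b} : Finset ℤ) (pairUp rest))
  | _ => ∅

/-- The minimal matching `M_min(X : k)`: pair off the smallest `|X| − k`
elements of `X` consecutively, and make the largest `k` elements trivial. -/
def Mmin (X : Finset ℤ) (k : ℕ) : Finset (Finset ℤ) :=
  pairUp ((X.sort (· ≤ ·)).take (X.card - k)) ∪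
    (((X.sort (· ≤ ·)).drop (X.card - k)).toFinset.image
      (fun x => ({-x, x} : Finset ℤ)))

lemma pair_eq_pair_iff' {a b c d : ℤ} :
    ({a,b} : Finset ℤ) = {c,d} ↔ a = c ∧ b = d ∨ a = d ∧ b = c := by
  rw [← Finset.coe_inj]; push_cast; exact Set.pair_eq_pair_iff

lemma exists_pair {b : Finset ℤ} (h : b.card = 2) : ∃ u v, u < v ∧ b = {u, v} := by
  obtain ⟨a, c, hac, rfl⟩ := Finset.card_eq_two.1 h
  rcases lt_or_gt_of_ne hac with h | h
  · exact ⟨a, c, h, rfl⟩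
  · exact ⟨c, a, h, Finset.pair_comm a c⟩

section
variable {X : Finset ℤ} {N : Finset (Finset ℤ)}

lemma mem_pos (hpos : ∀ x ∈ X, 0 < x) (hN : IsNCSP X N) {b} (hb : b ∈ N) {z} (hz : z ∈ b)
    (h0 : 0 < z) : z ∈ X := by
  rcases hN.2.1 b hb z hz with h | h
  · exact h
  · exact absurd (hpos _ h) (by omega)

lemma mem_neg (hpos : ∀ x ∈ X, 0 < x) (hN : IsNCSP X N) {b} (hb : b ∈ N) {z} (hz : z ∈ b)
    (h0 : z < 0) : -z ∈ X := by
  rcases hN.2.1 b hb z hz with h | h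
  · exact absurd (hpos _ h) (by omega)
  · exact h

lemma mem_nonzero (hpos : ∀ x ∈ X, 0 < x) (hN : IsNCSP X N) {b} (hb : b ∈ N) {z} (hz : z ∈ b) :
    z ≠ 0 := by
  rintro rfl
  have h := hN.2.1 b hb 0 hz
  simp only [neg_zero, or_self] at h
  exact absurd (hpos _ h) (by omega)

lemma block_unique (hN : IsNCSP X N) {b b'} (hb : b ∈ N) (hb' : b' ∈ N) {z} (hz : z ∈ b)
    (hz' : z ∈ b') : b = b' := by
  obtain ⟨c, _, hu⟩ := hN.2.2.1 z (hN.2.1 b hb z hz)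
  rw [hu b ⟨hb, hz⟩, hu b' ⟨hb', hz'⟩]

lemma mirror_mem (hN : IsNCSP X N) {u v : ℤ} (h : ({u,v} : Finset ℤ) ∈ N) :
    ({-u,-v} : Finset ℤ) ∈ N := by
  have := hN.2.2.2.1 _ h
  simpa using this

lemma noncross (hN : IsNCSP X N) {a b c d : ℤ} (h1 : a < b) (h2 : b < c) (h3 : c < d)
    (hA : ({a,c} : Finset ℤ) ∈ N) (hB : ({b,d} : Finset ℤ) ∈ N) : False :=
  hN.2.2.2.2 ⟨a, b, c, d, h1, h2, h3, hA, hB⟩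

lemma sign_pure (hN : IsNCSP X N) {u v : ℤ} (h : ({u,v} : Finset ℤ) ∈ N) (hu : u < 0)
    (hv : 0 < v) : v = -u := by
  by_contra hne
  have hm : ({-u,-v} : Finset ℤ) ∈ N := mirror_mem hN h
  rcases lt_or_gt_of_ne hne with hlt | hgt
  · exact noncross hN (a := u) (b := -v) (c := v) (d := -u) (by omega) (by omega) (by omega)
      h (Finset.pair_comm (-u) (-v) ▸ hm)
  · exact noncross hN (a := -v) (b := u) (c := -u) (d := v) (by omega) (by omega) (by omega)
      (Finset.pair_comm (-u) (-v) ▸ hm) h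

lemma no_straddle (hN : IsNCSP X N) {t u v : ℤ} (ht : ({-t,t} : Finset ℤ) ∈ N) (h0 : 0 < t)
    (huv : ({u,v} : Finset ℤ) ∈ N) (h1 : 0 < u) (h2 : u < t) (h3 : t < v) : False :=
  noncross hN (a := -t) (b := u) (c := t) (d := v) (by omega) h2 h3 ht huv

lemma exists_partner (hN : IsNCSP X N) {x : ℤ} (hx : x ∈ X ∨ -x ∈ X) :
    ∃ y, y ≠ x ∧ ({x,y} : Finset ℤ) ∈ N := by
  obtain ⟨b, ⟨hb, hxb⟩, _⟩ := hN.2.2.1 x hx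
  obtain ⟨u, v, huv, rfl⟩ := exists_pair (hN.1 b hb)
  rcases Finset.mem_insert.1 hxb with rfl | hxv
  · exact ⟨v, by omega, hb⟩
  · rcases Finset.mem_singleton.1 hxv with rfl
    exact ⟨u, by omega, Finset.pair_comm x u ▸ hb⟩

end

def wgt (b : Finset ℤ) : ℕ :=
  4 * (∑ x ∈ b, x).natAbs + ∑ x ∈ b, ∑ y ∈ b, (x - y).natAbs

def phi (M : Finset (Finset ℤ)) : ℕ := ∑ b ∈ M, wgt b

lemma wgt_pair {x y : ℤ} (h : x ≠ y) :
    wgt {x, y} = 4 * (x + y).natAbs + 2 * (x - y).natAbs := by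
  rw [wgt, Finset.sum_pair h, Finset.sum_pair h, Finset.sum_pair h, Finset.sum_pair h]
  omega

lemma sum_union_le' (A B : Finset (Finset ℤ)) :
    ∑ b ∈ A ∪ B, wgt b ≤ ∑ b ∈ A, wgt b + ∑ b ∈ B, wgt b := by
  rw [← Finset.union_sdiff_self_eq_union, Finset.sum_union Finset.disjoint_sdiff]
  exact Nat.add_le_add_left (Finset.sum_le_sum_of_subset (Finset.sdiff_subset)) _

lemma phi_step {N M S T : Finset (Finset ℤ)} (hS : S ⊆ N) (hM : M = (N \ S) ∪ T)
    (hlt : ∑ b ∈ T, wgt b < ∑ b ∈ S, wgt b) : phi M < phi N := by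
  have h1 : phi M ≤ ∑ b ∈ N \ S, wgt b + ∑ b ∈ T, wgt b := hM ▸ sum_union_le' _ _
  have h2 : ∑ b ∈ N \ S, wgt b + ∑ b ∈ S, wgt b = phi N := Finset.sum_sdiff hS
  omega

lemma phi_lt {X : Finset ℤ} (hpos : ∀ x ∈ X, 0 < x) {M N : Finset (Finset ℤ)}
    (h : LessDot X M N) : phi M < phi N := by
  rcases h with ⟨a, b, c, hcons, hcX, hbc, h1, h2, h3, hM⟩ |
      ⟨a, b, p, q, hcons, hpX, hqX, hbp, hpq, h1, h1', h2, h2', _, hM⟩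
  · have ha : 0 < a := hpos _ hcons.1
    have hb : 0 < b := hpos _ hcons.2.1
    have hab : a < b := hcons.2.2.1
    refine phi_step ?_ hM ?_
    · intro s hs
      simp only [Finset.mem_insert, Finset.mem_singleton] at hs
      rcases hs with rfl | rfl | rfl <;> assumption
    · have e1 : ∑ s ∈ ({({-a,a} : Finset ℤ), {b,c}, {-b,-c}} : Finset (Finset ℤ)), wgt s
          = wgt {-a,a} + (wgt {b,c} + wgt {-b,-c}) := by
        rw [Finset.sum_insert (by simp [pair_eq_pair_iff']; omega),
          Finset.sum_pair (by simp [pair_eq_pair_iff']; omega)]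
      have e2 : ∑ s ∈ ({({a,b} : Finset ℤ), {-a,-b}, {-c,c}} : Finset (Finset ℤ)), wgt s
          = wgt {a,b} + (wgt {-a,-b} + wgt {-c,c}) := by
        rw [Finset.sum_insert (by simp [pair_eq_pair_iff']; omega),
          Finset.sum_pair (by simp [pair_eq_pair_iff']; omega)]
      rw [e1, e2, wgt_pair (by omega), wgt_pair (by omega), wgt_pair (by omega),
        wgt_pair (by omega), wgt_pair (by omega), wgt_pair (by omega)]
      omega
  · have ha : 0 < a := hpos _ hcons.1
    have hb : 0 < b := hpos _ hcons.2.1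
    have hab : a < b := hcons.2.2.1
    refine phi_step ?_ hM ?_
    · intro s hs
      simp only [Finset.mem_insert, Finset.mem_singleton] at hs
      rcases hs with rfl | rfl | rfl | rfl <;> assumption
    · have e1 : ∑ s ∈ ({({a,q} : Finset ℤ), {-a,-q}, {b,p}, {-b,-p}} : Finset (Finset ℤ)), wgt s
          = wgt {a,q} + (wgt {-a,-q} + (wgt {b,p} + wgt {-b,-p})) := by
        rw [Finset.sum_insert (by simp [pair_eq_pair_iff']; omega),
          Finset.sum_insert (by simp [pair_eq_pair_iff']; omega),
          Finset.sum_pair (by simp [pair_eq_pair_iff']; omega)]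
      have e2 : ∑ s ∈ ({({a,b} : Finset ℤ), {-a,-b}, {p,q}, {-p,-q}} : Finset (Finset ℤ)), wgt s
          = wgt {a,b} + (wgt {-a,-b} + (wgt {p,q} + wgt {-p,-q})) := by
        rw [Finset.sum_insert (by simp [pair_eq_pair_iff']; omega),
          Finset.sum_insert (by simp [pair_eq_pair_iff']; omega),
          Finset.sum_pair (by simp [pair_eq_pair_iff']; omega)]
      rw [e1, e2, wgt_pair (by omega), wgt_pair (by omega), wgt_pair (by omega),
        wgt_pair (by omega), wgt_pair (by omega), wgt_pair (by omega),
        wgt_pair (by omega), wgt_pair (by omega)]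
      omega

lemma pairUp_sign : ∀ l : List ℤ, (∀ z ∈ l, 0 < z) → ∀ d ∈ pairUp l,
    (∀ z ∈ d, 0 < z) ∨ (∀ z ∈ d, z < 0)
  | [], _, d, hd => by simp [pairUp] at hd
  | [a], _, d, hd => by simp [pairUp] at hd
  | a :: b :: rest, hl, d, hd => by
    have ha : 0 < a := hl a (by simp)
    have hb : 0 < b := hl b (by simp)
    rw [pairUp, Finset.mem_insert, Finset.mem_insert] at hd
    rcases hd with rfl | rfl | hd
    · left; intro z hz; rcases Finset.mem_insert.1 hz with rfl | hz
      · exact ha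
      · rw [Finset.mem_singleton] at hz; omega
    · right; intro z hz; rcases Finset.mem_insert.1 hz with rfl | hz
      · omega
      · rw [Finset.mem_singleton] at hz; omega
    · exact pairUp_sign rest (fun z hz => hl z (by simp [hz])) d hd

theorem Mk_isNCSP : ∀ l D : List ℤ, (l ++ D).Pairwise (· < ·) → (∀ x ∈ l ++ D, 0 < x) →
    Even l.length →
    IsNCSP (l.toFinset ∪ D.toFinset) (pairUp l ∪ D.toFinset.image fun x => ({-x,x} : Finset ℤ))
  | [a], D, hs, hp, he => by simp [Nat.even_add_one] at he
  | [], D, hs, hp, he => by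
    have hD : ∀ x ∈ D.toFinset, 0 < x := fun x hx => hp x (by simpa using hx)
    have memM : ∀ d, d ∈ pairUp [] ∪ D.toFinset.image (fun x => ({-x,x} : Finset ℤ)) ↔
        ∃ x ∈ D.toFinset, ({-x,x} : Finset ℤ) = d := by
      intro d; simp [pairUp]
    refine ⟨?_, ?_, ?_, ?_, ?_⟩
    · intro d hd
      obtain ⟨x, hx, rfl⟩ := (memM d).1 hd
      exact Finset.card_pair (by have := hD x hx; omega)
    · intro d hd z hz
      obtain ⟨x, hx, rfl⟩ := (memM d).1 hd
      rcases Finset.mem_insert.1 hz with rfl | hz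
      · right; simpa using hx
      · rw [Finset.mem_singleton] at hz; subst hz; left; simpa using hx
    · intro z hz
      simp only [List.toFinset_nil, Finset.empty_union] at hz
      have key : ∀ u ∈ D.toFinset, z ∈ ({-u, u} : Finset ℤ) → z = u ∨ z = -u := by
        intro u hu hzu
        rcases Finset.mem_insert.1 hzu with rfl | h
        · right; ring
        · left; exact (Finset.mem_singleton.1 h)
      rcases hz with hz | hz
      · refine ⟨{-z, z}, ⟨(memM _).2 ⟨z, hz, rfl⟩, by simp⟩, ?_⟩
        rintro d ⟨hd, hzd⟩
        obtain ⟨x, hx, rfl⟩ := (memM d).1 hd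
        have h1 := hD z hz; have h2 := hD x hx
        rcases key x hx hzd with rfl | rfl
        · rfl
        · omega
      · refine ⟨{-(-z), -z}, ⟨(memM _).2 ⟨-z, hz, rfl⟩, by simp⟩, ?_⟩
        rintro d ⟨hd, hzd⟩
        obtain ⟨x, hx, rfl⟩ := (memM d).1 hd
        have h1 := hD (-z) hz; have h2 := hD x hx
        rcases key x hx hzd with rfl | h
        · omega
        · rw [show x = -z by omega]
    · intro d hd
      obtain ⟨x, hx, rfl⟩ := (memM d).1 hd
      refine (memM _).2 ⟨x, hx, ?_⟩
      rw [Finset.image_insert, Finset.image_singleton]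
      simp [Finset.pair_comm]
    · rintro ⟨u1, u2, u3, u4, h12, h23, h34, hA, hB⟩
      obtain ⟨x, hx, hxe⟩ := (memM _).1 hA
      obtain ⟨y, hy, hye⟩ := (memM _).1 hB
      have h1 := hD x hx; have h2 := hD y hy
      rcases pair_eq_pair_iff'.1 hxe.symm with ⟨rfl, rfl⟩ | ⟨h3, h4⟩
      · rcases pair_eq_pair_iff'.1 hye.symm with ⟨rfl, rfl⟩ | ⟨h5, h6⟩ <;> omega
      · omega
  | a :: b :: rest, D, hs, hp, he => by
    rw [List.cons_append, List.cons_append, List.pairwise_cons, List.pairwise_cons] at hs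
    obtain ⟨hagt, hbgt, hsr⟩ := hs
    have ha : 0 < a := hp a (by simp)
    have hb : 0 < b := hp b (by simp)
    have hab : a < b := hagt b (by simp)
    have he' : Even rest.length := by
      rcases he with ⟨t, ht⟩; exact ⟨t - 1, by simp at ht ⊢; omega⟩
    have IH := Mk_isNCSP rest D hsr (fun x hx => hp x (by simp at hx ⊢; tauto)) he'
    set X' := rest.toFinset ∪ D.toFinset with hX'
    set M' := pairUp rest ∪ D.toFinset.image (fun x => ({-x,x} : Finset ℤ)) with hM'
    have hXb : ∀ z ∈ X', b < z := by
      intro z hz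
      rcases Finset.mem_union.1 hz with hz | hz
      · exact hbgt z (by simp at hz; simp [hz])
      · exact hbgt z (by simp at hz; simp [hz])
    have hM'g : ∀ d ∈ M', ∀ z ∈ d, b < z ∨ z < -b := by
      intro d hd z hz
      rcases IH.2.1 d hd z hz with h | h
      · left; exact hXb z h
      · right; have := hXb _ h; omega
    have hXeq : (a :: b :: rest).toFinset ∪ D.toFinset = insert a (insert b X') := by
      simp [hX', Finset.insert_union]
    have hMeq : pairUp (a :: b :: rest) ∪ D.toFinset.image (fun x => ({-x,x} : Finset ℤ)) =
        insert ({a,b} : Finset ℤ) (insert ({-a,-b} : Finset ℤ) M') := by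
      rw [pairUp, Finset.insert_union, Finset.insert_union]
    rw [hXeq, hMeq]
    have memM : ∀ d, d ∈ insert ({a,b} : Finset ℤ) (insert ({-a,-b} : Finset ℤ) M') ↔
        d = {a,b} ∨ d = {-a,-b} ∨ d ∈ M' := by intro d; simp
    have hXmem : ∀ z, z ∈ insert a (insert b X') ∨ -z ∈ insert a (insert b X') →
        z = a ∨ z = b ∨ z = -a ∨ z = -b ∨ z ∈ X' ∨ -z ∈ X' := by
      intro z hz
      rcases hz with hz | hz <;> simp only [Finset.mem_insert] at hz <;> rcases hz with h|h|h
      · tauto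
      · tauto
      · tauto
      · right; right; left; omega
      · right; right; right; left; omega
      · tauto
    refine ⟨?_, ?_, ?_, ?_, ?_⟩
    · intro d hd
      rcases (memM d).1 hd with rfl | rfl | hd
      · exact Finset.card_pair (by omega)
      · exact Finset.card_pair (by omega)
      · exact IH.1 d hd
    · intro d hd z hz
      have subX : ∀ w, w ∈ X' ∨ -w ∈ X' → w ∈ insert a (insert b X') ∨
          -w ∈ insert a (insert b X') := by
        intro w hw; rcases hw with hw | hw
        · left; simp [hw]
        · right; simp [hw]
      rcases (memM d).1 hd with rfl | rfl | hd
      · rcases Finset.mem_insert.1 hz with rfl | hz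
        · left; simp
        · rw [Finset.mem_singleton] at hz; subst hz; left; simp
      · rcases Finset.mem_insert.1 hz with rfl | hz
        · right; simp
        · rw [Finset.mem_singleton] at hz; subst hz; right; simp
      · exact subX z (IH.2.1 d hd z hz)
    · intro z hz
      have hza : ∀ d ∈ M', z ∈ d → (z = a ∨ z = b ∨ z = -a ∨ z = -b) → False := by
        intro d hd hzd hcase
        rcases hM'g d hd z hzd with h | h <;> omega
      rcases hXmem z hz with heq | heq | heq | heq | hz' | hz'
      · refine ⟨({a,b} : Finset ℤ), ⟨(memM _).2 (Or.inl rfl), by simp [heq]⟩, ?_⟩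
        rintro d ⟨hd, hzd⟩
        rcases (memM d).1 hd with rfl | rfl | hd
        · rfl
        · simp only [Finset.mem_insert, Finset.mem_singleton] at hzd; omega
        · exact absurd (hza d hd hzd (by tauto)) (by simp)
      · refine ⟨({a,b} : Finset ℤ), ⟨(memM _).2 (Or.inl rfl), by simp [heq]⟩, ?_⟩
        rintro d ⟨hd, hzd⟩
        rcases (memM d).1 hd with rfl | rfl | hd
        · rfl
        · simp only [Finset.mem_insert, Finset.mem_singleton] at hzd; omega
        · exact absurd (hza d hd hzd (by tauto)) (by simp)
      · refine ⟨({-a,-b} : Finset ℤ), ⟨(memM _).2 (Or.inr (Or.inl rfl)), by simp [heq]⟩, ?_⟩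
        rintro d ⟨hd, hzd⟩
        rcases (memM d).1 hd with rfl | rfl | hd
        · simp only [Finset.mem_insert, Finset.mem_singleton] at hzd; omega
        · rfl
        · exact absurd (hza d hd hzd (by tauto)) (by simp)
      · refine ⟨({-a,-b} : Finset ℤ), ⟨(memM _).2 (Or.inr (Or.inl rfl)), by simp [heq]⟩, ?_⟩
        rintro d ⟨hd, hzd⟩
        rcases (memM d).1 hd with rfl | rfl | hd
        · simp only [Finset.mem_insert, Finset.mem_singleton] at hzd; omega
        · rfl
        · exact absurd (hza d hd hzd (by tauto)) (by simp)
      all_goals {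
        obtain ⟨d0, ⟨hd0, hzd0⟩, hu⟩ := IH.2.2.1 z (by tauto)
        have hz4 : ¬(z = a ∨ z = b ∨ z = -a ∨ z = -b) := by
          intro hc
          exact hza d0 hd0 hzd0 hc
        refine ⟨d0, ⟨(memM _).2 (Or.inr (Or.inr hd0)), hzd0⟩, ?_⟩
        rintro d ⟨hd, hzd⟩
        rcases (memM d).1 hd with rfl | rfl | hd
        · simp only [Finset.mem_insert, Finset.mem_singleton] at hzd; tauto
        · simp only [Finset.mem_insert, Finset.mem_singleton] at hzd
          exact absurd (by tauto) hz4
        · exact hu d ⟨hd, hzd⟩ }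
    · intro d hd
      rcases (memM d).1 hd with rfl | rfl | hd
      · refine (memM _).2 (Or.inr (Or.inl ?_))
        rw [Finset.image_insert, Finset.image_singleton]
      · refine (memM _).2 (Or.inl ?_)
        rw [Finset.image_insert, Finset.image_singleton]; simp
      · exact (memM _).2 (Or.inr (Or.inr (IH.2.2.2.1 d hd)))
    · rintro ⟨u1, u2, u3, u4, h12, h23, h34, hA, hB⟩
      have hinA : u2 ∈ ({u2, u4} : Finset ℤ) := by simp
      have hinB : u3 ∈ ({u1, u3} : Finset ℤ) := by simp
      rcases (memM _).1 hA with hA' | hA' | hA' <;> rcases (memM _).1 hB with hB' | hB' | hB'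
      · rcases pair_eq_pair_iff'.1 hA' with ⟨rfl, rfl⟩ | ⟨rfl, rfl⟩ <;>
          rcases pair_eq_pair_iff'.1 hB' with ⟨h5, h6⟩ | ⟨h5, h6⟩ <;> omega
      · rcases pair_eq_pair_iff'.1 hA' with ⟨rfl, rfl⟩ | ⟨rfl, rfl⟩ <;>
          rcases pair_eq_pair_iff'.1 hB' with ⟨h5, h6⟩ | ⟨h5, h6⟩ <;> omega
      · -- A = {a,b}, B ∈ M' : u2 strictly between
        rcases pair_eq_pair_iff'.1 hA' with ⟨rfl, rfl⟩ | ⟨rfl, rfl⟩ <;>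
          rcases hM'g _ hB' u2 hinA with h | h <;> omega
      · rcases pair_eq_pair_iff'.1 hB' with ⟨rfl, rfl⟩ | ⟨rfl, rfl⟩ <;>
          rcases pair_eq_pair_iff'.1 hA' with ⟨h5, h6⟩ | ⟨h5, h6⟩ <;> omega
      · rcases pair_eq_pair_iff'.1 hA' with ⟨rfl, rfl⟩ | ⟨rfl, rfl⟩ <;>
          rcases pair_eq_pair_iff'.1 hB' with ⟨h5, h6⟩ | ⟨h5, h6⟩ <;> omega
      · rcases pair_eq_pair_iff'.1 hA' with ⟨rfl, rfl⟩ | ⟨rfl, rfl⟩ <;>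
          rcases hM'g _ hB' u2 hinA with h | h <;> omega
      · rcases pair_eq_pair_iff'.1 hB' with ⟨rfl, rfl⟩ | ⟨rfl, rfl⟩ <;>
          rcases hM'g _ hA' u3 hinB with h | h <;> omega
      · rcases pair_eq_pair_iff'.1 hB' with ⟨rfl, rfl⟩ | ⟨rfl, rfl⟩ <;>
          rcases hM'g _ hA' u3 hinB with h | h <;> omega
      · exact IH.2.2.2.2 ⟨u1, u2, u3, u4, h12, h23, h34, hA', hB'⟩

lemma Mmin_isNCSP (X : Finset ℤ) (hpos : ∀ x ∈ X, 0 < x) (k : ℕ) (hk : k ≤ X.card)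
    (heven : Even (X.card - k)) : IsNCSP X (Mmin X k) := by
  set l := X.sort (· ≤ ·) with hl
  set n := X.card - k with hn
  have hls : l.Pairwise (· < ·) := List.sortedLT_iff_pairwise.1 X.sortedLT_sort
  have hlen : l.length = X.card := X.length_sort _
  have hsplit : l.take n ++ l.drop n = l := List.take_append_drop n l
  have h1 : (l.take n ++ l.drop n).Pairwise (· < ·) := by rw [hsplit]; exact hls
  have h2 : ∀ x ∈ l.take n ++ l.drop n, 0 < x := by
    rw [hsplit]; intro x hx; exact hpos x (by rwa [Finset.mem_sort] at hx)
  have h3 : Even (l.take n).length := by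
    rw [List.length_take, min_eq_left (by omega)]; exact heven
  have key := Mk_isNCSP (l.take n) (l.drop n) h1 h2 h3
  have hX : (l.take n).toFinset ∪ (l.drop n).toFinset = X := by
    rw [← List.toFinset_append, hsplit]; exact X.sort_toFinset _
  rw [hX] at key
  exact key

lemma Mmin_trivCount (X : Finset ℤ) (hpos : ∀ x ∈ X, 0 < x) (k : ℕ) (hk : k ≤ X.card) :
    trivCount X (Mmin X k) = k := by
  set l := X.sort (· ≤ ·) with hl
  set n := X.card - k with hn
  have hlen : l.length = X.card := X.length_sort _
  have hdropX : ∀ y ∈ (l.drop n).toFinset, y ∈ X := by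
    intro y hy
    have : y ∈ l := List.mem_of_mem_drop (List.mem_toFinset.1 hy)
    rwa [Finset.mem_sort] at this
  have hmem : ∀ x ∈ X, (({-x,x} : Finset ℤ) ∈ Mmin X k ↔ x ∈ (l.drop n).toFinset) := by
    intro x hx
    have hx0 : 0 < x := hpos x hx
    constructor
    · intro h
      have htakeX : ∀ z ∈ l.take n, z ∈ X := by
        intro z hz
        have hz' : z ∈ l := List.mem_of_mem_take hz
        rwa [Finset.mem_sort] at hz'
      rcases Finset.mem_union.1 h with h | h
      · rcases pairUp_sign (l.take n) (fun z hz => hpos z (htakeX z hz)) _ h with hp | hp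
        · exact absurd (hp (-x) (by simp)) (by omega)
        · exact absurd (hp x (by simp)) (by omega)
      · obtain ⟨y, hy, hye⟩ := Finset.mem_image.1 h
        have hy0 : 0 < y := hpos y (hdropX y hy)
        rcases pair_eq_pair_iff'.1 hye with ⟨h1, h2⟩ | ⟨h1, h2⟩
        · rwa [← h2]
        · omega
    · intro h
      exact Finset.mem_union_right _ (Finset.mem_image_of_mem _ h)
  have hfil : X.filter (fun x => ({-x,x} : Finset ℤ) ∈ Mmin X k) = (l.drop n).toFinset := by
    apply Finset.ext; intro x
    simp only [Finset.mem_filter]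
    constructor
    · rintro ⟨hx, h⟩; exact (hmem x hx).1 h
    · intro h; exact ⟨hdropX x h, (hmem x (hdropX x h)).2 h⟩
  rw [trivCount, hfil, List.toFinset_card_of_nodup ((X.sort_nodup _).sublist (List.drop_sublist _ _)),
    List.length_drop, hlen]
  omega

lemma move1_preserves {X : Finset ℤ} (hpos : ∀ x ∈ X, 0 < x) {M N : Finset (Finset ℤ)}
    (hN : IsNCSP X N) (h : Move1 X M N) :
    IsNCSP X M ∧ trivCount X M = trivCount X N := by
  obtain ⟨a, b, c, hcons, hcX, hbc, h1, h2, h3, hM⟩ := h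
  obtain ⟨haX, hbX, hab, hconsec⟩ := hcons
  have ha : 0 < a := hpos _ haX
  have hb : 0 < b := hpos _ hbX
  have hc : 0 < c := hpos _ hcX
  have memM : ∀ d, d ∈ M ↔ (d ∈ N ∧ ¬(d = {-a,a} ∨ d = {b,c} ∨ d = {-b,-c})) ∨
      (d = {a,b} ∨ d = {-a,-b} ∨ d = {-c,c}) := by
    intro d
    rw [hM]
    simp only [Finset.mem_union, Finset.mem_sdiff, Finset.mem_insert, Finset.mem_singleton]
  have hBa : ∀ d ∈ N, a ∈ d → d = {-a,a} := fun d hd hz => block_unique hN hd h1 hz (by simp)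
  have hBa' : ∀ d ∈ N, -a ∈ d → d = {-a,a} := fun d hd hz => block_unique hN hd h1 hz (by simp)
  have hBb : ∀ d ∈ N, b ∈ d → d = {b,c} := fun d hd hz => block_unique hN hd h2 hz (by simp)
  have hBc : ∀ d ∈ N, c ∈ d → d = {b,c} := fun d hd hz => block_unique hN hd h2 hz (by simp)
  have hBb' : ∀ d ∈ N, -b ∈ d → d = {-b,-c} := fun d hd hz => block_unique hN hd h3 hz (by simp)
  have hBc' : ∀ d ∈ N, -c ∈ d → d = {-b,-c} := fun d hd hz => block_unique hN hd h3 hz (by simp)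
  have no_between : ∀ z : ℤ, (z ∈ X ∨ -z ∈ X) → ¬(a < z ∧ z < b) := by
    rintro z hz ⟨hz1, hz2⟩
    have hz0 : 0 < z := by omega
    have hzX : z ∈ X := by
      rcases hz with h | h
      · exact h
      · exact absurd (hpos _ h) (by omega)
    exact hconsec z hzX ⟨hz1, hz2⟩
  have no_between' : ∀ z : ℤ, (z ∈ X ∨ -z ∈ X) → ¬(-b < z ∧ z < -a) := by
    rintro z hz ⟨hz1, hz2⟩
    have hz' : -z ∈ X ∨ - -z ∈ X := by rw [neg_neg]; tauto
    exact no_between (-z) hz' ⟨by omega, by omega⟩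
  have aux_c : ∀ u v : ℤ, 0 < u → u < c → c < v → ({u,v} : Finset ℤ) ∈ N → False := by
    intro u v hu huc hcv huv
    rcases lt_trichotomy u a with h | rfl | h
    · exact no_straddle hN h1 ha huv hu h (by omega)
    · have := hBa _ huv (by simp)
      rcases pair_eq_pair_iff'.1 this with ⟨e1, e2⟩ | ⟨e1, e2⟩ <;> omega
    · have huX : u ∈ X := by
        rcases hN.2.1 _ huv u (by simp) with hh | hh
        · exact hh
        · exact absurd (hpos _ hh) (by omega)
      have hub : ¬(a < u ∧ u < b) := hconsec u huX
      rcases lt_trichotomy u b with h' | rfl | h'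
      · omega
      · have := hBb _ huv (by simp)
        rcases pair_eq_pair_iff'.1 this with ⟨e1, e2⟩ | ⟨e1, e2⟩ <;> omega
      · exact noncross hN (a := b) (b := u) (c := c) (d := v) h' huc hcv h2 huv
  constructor
  · refine ⟨?_, ?_, ?_, ?_, ?_⟩
    · intro d hd
      rcases (memM d).1 hd with ⟨hdN, _⟩ | (rfl | rfl | rfl)
      · exact hN.1 d hdN
      · exact Finset.card_pair (by omega)
      · exact Finset.card_pair (by omega)
      · exact Finset.card_pair (by omega)
    · intro d hd z hz
      rcases (memM d).1 hd with ⟨hdN, _⟩ | (rfl | rfl | rfl) <;>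
        [exact hN.2.1 d hdN z hz; skip; skip; skip] <;>
        simp only [Finset.mem_insert, Finset.mem_singleton] at hz <;>
        rcases hz with rfl | rfl <;> simp [haX, hbX, hcX]
    · intro z hz
      by_cases hza : z = a
      · refine ⟨({a,b} : Finset ℤ), ⟨(memM _).2 (Or.inr (Or.inl rfl)), by simp [hza]⟩, ?_⟩
        rintro d ⟨hd, hzd⟩
        rcases (memM d).1 hd with ⟨hdN, hrem⟩ | (rfl | rfl | rfl)
        · exact absurd (Or.inl (hBa d hdN (hza ▸ hzd))) hrem
        · rfl
        · simp only [Finset.mem_insert, Finset.mem_singleton] at hzd; omega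
        · simp only [Finset.mem_insert, Finset.mem_singleton] at hzd; omega
      by_cases hzb : z = b
      · refine ⟨({a,b} : Finset ℤ), ⟨(memM _).2 (Or.inr (Or.inl rfl)), by simp [hzb]⟩, ?_⟩
        rintro d ⟨hd, hzd⟩
        rcases (memM d).1 hd with ⟨hdN, hrem⟩ | (rfl | rfl | rfl)
        · exact absurd (Or.inr (Or.inl (hBb d hdN (hzb ▸ hzd)))) hrem
        · rfl
        · simp only [Finset.mem_insert, Finset.mem_singleton] at hzd; omega
        · simp only [Finset.mem_insert, Finset.mem_singleton] at hzd; omega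
      by_cases hza' : z = -a
      · refine ⟨({-a,-b} : Finset ℤ), ⟨(memM _).2 (Or.inr (Or.inr (Or.inl rfl))), by simp [hza']⟩, ?_⟩
        rintro d ⟨hd, hzd⟩
        rcases (memM d).1 hd with ⟨hdN, hrem⟩ | (rfl | rfl | rfl)
        · exact absurd (Or.inl (hBa' d hdN (hza' ▸ hzd))) hrem
        · simp only [Finset.mem_insert, Finset.mem_singleton] at hzd; omega
        · rfl
        · simp only [Finset.mem_insert, Finset.mem_singleton] at hzd; omega
      by_cases hzb' : z = -b
      · refine ⟨({-a,-b} : Finset ℤ), ⟨(memM _).2 (Or.inr (Or.inr (Or.inl rfl))), by simp [hzb']⟩, ?_⟩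
        rintro d ⟨hd, hzd⟩
        rcases (memM d).1 hd with ⟨hdN, hrem⟩ | (rfl | rfl | rfl)
        · exact absurd (Or.inr (Or.inr (hBb' d hdN (hzb' ▸ hzd)))) hrem
        · simp only [Finset.mem_insert, Finset.mem_singleton] at hzd; omega
        · rfl
        · simp only [Finset.mem_insert, Finset.mem_singleton] at hzd; omega
      by_cases hzc : z = c
      · refine ⟨({-c,c} : Finset ℤ), ⟨(memM _).2 (Or.inr (Or.inr (Or.inr rfl))), by simp [hzc]⟩, ?_⟩
        rintro d ⟨hd, hzd⟩
        rcases (memM d).1 hd with ⟨hdN, hrem⟩ | (rfl | rfl | rfl)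
        · exact absurd (Or.inr (Or.inl (hBc d hdN (hzc ▸ hzd)))) hrem
        · simp only [Finset.mem_insert, Finset.mem_singleton] at hzd; omega
        · simp only [Finset.mem_insert, Finset.mem_singleton] at hzd; omega
        · rfl
      by_cases hzc' : z = -c
      · refine ⟨({-c,c} : Finset ℤ), ⟨(memM _).2 (Or.inr (Or.inr (Or.inr rfl))), by simp [hzc']⟩, ?_⟩
        rintro d ⟨hd, hzd⟩
        rcases (memM d).1 hd with ⟨hdN, hrem⟩ | (rfl | rfl | rfl)
        · exact absurd (Or.inr (Or.inr (hBc' d hdN (hzc' ▸ hzd)))) hrem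
        · simp only [Finset.mem_insert, Finset.mem_singleton] at hzd; omega
        · simp only [Finset.mem_insert, Finset.mem_singleton] at hzd; omega
        · rfl
      · obtain ⟨d0, ⟨hd0N, hzd0⟩, hu⟩ := hN.2.2.1 z hz
        have hd0M : d0 ∈ M := by
          refine (memM _).2 (Or.inl ⟨hd0N, ?_⟩)
          rintro (rfl | rfl | rfl) <;>
            simp only [Finset.mem_insert, Finset.mem_singleton] at hzd0 <;> tauto
        refine ⟨d0, ⟨hd0M, hzd0⟩, ?_⟩
        rintro d ⟨hd, hzd⟩
        rcases (memM d).1 hd with ⟨hdN, _⟩ | (rfl | rfl | rfl)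
        · exact block_unique hN hdN hd0N hzd hzd0
        · simp only [Finset.mem_insert, Finset.mem_singleton] at hzd; tauto
        · simp only [Finset.mem_insert, Finset.mem_singleton] at hzd
          exact absurd (by omega : z = -a ∨ z = -b) (by tauto)
        · simp only [Finset.mem_insert, Finset.mem_singleton] at hzd
          exact absurd (by omega : z = -c ∨ z = c) (by tauto)
    · intro d hd
      have img_pair : ∀ u v : ℤ, ({u,v} : Finset ℤ).image (fun x => -x) = {-u,-v} := by
        intro u v; simp
      have img_invol : ∀ s : Finset ℤ, (s.image (fun x : ℤ => -x)).image (fun x : ℤ => -x) = s := by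
        intro s; rw [Finset.image_image]; simp
      rcases (memM d).1 hd with ⟨hdN, hrem⟩ | (rfl | rfl | rfl)
      · refine (memM _).2 (Or.inl ⟨hN.2.2.2.1 d hdN, ?_⟩)
        rintro (he | he | he)
        · apply hrem; left
          have hde := congrArg (Finset.image (fun x : ℤ => -x)) he
          rw [img_invol, img_pair] at hde
          simp only [neg_neg] at hde
          rw [hde]; exact Finset.pair_comm a (-a)
        · apply hrem; right; right
          have hde := congrArg (Finset.image (fun x : ℤ => -x)) he
          rw [img_invol, img_pair] at hde
          exact hde
        · apply hrem; right; left
          have hde := congrArg (Finset.image (fun x : ℤ => -x)) he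
          rw [img_invol, img_pair] at hde
          simp only [neg_neg] at hde
          exact hde
      · rw [img_pair]; exact (memM _).2 (Or.inr (Or.inr (Or.inl rfl)))
      · rw [img_pair]
        refine (memM _).2 (Or.inr (Or.inl ?_)); simp
      · rw [img_pair]
        refine (memM _).2 (Or.inr (Or.inr (Or.inr ?_)))
        rw [Finset.pair_comm]; simp
    · rintro ⟨u1, u2, u3, u4, h12, h23, h34, hA, hB⟩
      have hgA : ∀ (d : Finset ℤ), d ∈ N → ∀ z ∈ d, z ∈ X ∨ -z ∈ X := hN.2.1
      rcases (memM _).1 hA with ⟨hAN, hArem⟩ | hAnew <;> rcases (memM _).1 hB with ⟨hBN, hBrem⟩ | hBnew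
      · exact noncross hN h12 h23 h34 hAN hBN
      · -- A old, B new
        rcases hBnew with he | he | he <;>
          rcases pair_eq_pair_iff'.1 he with ⟨e1, e2⟩ | ⟨e1, e2⟩
        · exact no_between u3 (hgA _ hAN u3 (by simp)) ⟨by omega, by omega⟩
        · omega
        · omega
        · exact no_between' u3 (hgA _ hAN u3 (by simp)) ⟨by omega, by omega⟩
        · -- B = {-c, c} : u2 = -c, u4 = c, so u1 < -c < u3 < c
          have hu30 : u3 ≠ 0 := mem_nonzero hpos hN hAN (by simp : u3 ∈ ({u1, u3} : Finset ℤ))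
          rcases lt_trichotomy u3 0 with h0 | h0 | h0
          · have hmir : ({-u3, -u1} : Finset ℤ) ∈ N := by
              have := mirror_mem hN hAN
              rwa [Finset.pair_comm] at this
            exact aux_c (-u3) (-u1) (by omega) (by omega) (by omega) hmir
          · omega
          · have := sign_pure hN hAN (by omega) h0
            omega
        · omega
      · -- A new, B old
        rcases hAnew with he | he | he <;>
          rcases pair_eq_pair_iff'.1 he with ⟨e1, e2⟩ | ⟨e1, e2⟩
        · exact no_between u2 (hgA _ hBN u2 (by simp)) ⟨by omega, by omega⟩
        · omega
        · omega
        · exact no_between' u2 (hgA _ hBN u2 (by simp)) ⟨by omega, by omega⟩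
        · -- A = {-c, c} : u1 = -c, u3 = c, u2 ∈ (-c,c), u4 > c
          have hu20 : u2 ≠ 0 := mem_nonzero hpos hN hBN (by simp : u2 ∈ ({u2, u4} : Finset ℤ))
          rcases lt_trichotomy u2 0 with h0 | h0 | h0
          · have := sign_pure hN hBN h0 (by omega : (0:ℤ) < u4)
            omega
          · omega
          · exact aux_c u2 u4 h0 (by omega) (by omega) hBN
        · omega
      · -- both new
        rcases hAnew with he | he | he <;> rcases hBnew with he' | he' | he' <;>
          rcases pair_eq_pair_iff'.1 he with ⟨e1, e2⟩ | ⟨e1, e2⟩ <;>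
          rcases pair_eq_pair_iff'.1 he' with ⟨e3, e4⟩ | ⟨e3, e4⟩ <;> omega
  · -- trivCount
    have hfe : X.filter (fun x => ({-x,x} : Finset ℤ) ∈ M) =
        insert c ((X.filter (fun x => ({-x,x} : Finset ℤ) ∈ N)).erase a) := by
      ext x
      simp only [Finset.mem_insert, Finset.mem_erase, Finset.mem_filter]
      constructor
      · rintro ⟨hxX, hxM⟩
        have hx0 : 0 < x := hpos x hxX
        rcases (memM _).1 hxM with ⟨hxN, hrem⟩ | hnew
        · right
          refine ⟨?_, hxX, hxN⟩
          rintro rfl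
          exact hrem (Or.inl rfl)
        · left
          rcases hnew with he | he | he <;>
            rcases pair_eq_pair_iff'.1 he with ⟨e1, e2⟩ | ⟨e1, e2⟩ <;> omega
      · rintro (rfl | ⟨hxa, hxX, hxN⟩)
        · exact ⟨hcX, (memM _).2 (Or.inr (Or.inr (Or.inr rfl)))⟩
        · have hx0 : 0 < x := hpos x hxX
          refine ⟨hxX, (memM _).2 (Or.inl ⟨hxN, ?_⟩)⟩
          rintro (he | he | he) <;>
            rcases pair_eq_pair_iff'.1 he with ⟨e1, e2⟩ | ⟨e1, e2⟩ <;> omega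
    have hcnot : c ∉ (X.filter (fun x => ({-x,x} : Finset ℤ) ∈ N)).erase a := by
      intro hcmem
      have hcN : ({-c,c} : Finset ℤ) ∈ N := (Finset.mem_filter.1 (Finset.mem_of_mem_erase hcmem)).2
      have := hBc' _ hcN (by simp)
      rcases pair_eq_pair_iff'.1 this with ⟨e1, e2⟩ | ⟨e1, e2⟩ <;> omega
    have hamem : a ∈ X.filter (fun x => ({-x,x} : Finset ℤ) ∈ N) := Finset.mem_filter.2 ⟨haX, h1⟩
    have hposcard : 0 < (X.filter (fun x => ({-x,x} : Finset ℤ) ∈ N)).card :=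
      Finset.card_pos.2 ⟨a, hamem⟩
    rw [trivCount, trivCount, hfe, Finset.card_insert_of_notMem hcnot,
      Finset.card_erase_of_mem hamem]
    omega

lemma move2_preserves {X : Finset ℤ} (hpos : ∀ x ∈ X, 0 < x) {M N : Finset (Finset ℤ)}
    (hN : IsNCSP X N) (h : Move2 X M N) :
    IsNCSP X M ∧ trivCount X M = trivCount X N := by
  obtain ⟨a, b, p, q, hcons, hpX, hqX, hbp, hpq, h1, h2, h3, h4, hstr, hM⟩ := h
  obtain ⟨haX, hbX, hab, hconsec⟩ := hcons
  have ha : 0 < a := hpos _ haX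
  have hb : 0 < b := hpos _ hbX
  have hp : 0 < p := hpos _ hpX
  have hq : 0 < q := hpos _ hqX
  have memM : ∀ d, d ∈ M ↔
      (d ∈ N ∧ ¬(d = {a,q} ∨ d = {-a,-q} ∨ d = {b,p} ∨ d = {-b,-p})) ∨
      (d = {a,b} ∨ d = {-a,-b} ∨ d = {p,q} ∨ d = {-p,-q}) := by
    intro d
    rw [hM]
    simp only [Finset.mem_union, Finset.mem_sdiff, Finset.mem_insert, Finset.mem_singleton]
  have hBa : ∀ d ∈ N, a ∈ d → d = {a,q} := fun d hd hz => block_unique hN hd h1 hz (by simp)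
  have hBq : ∀ d ∈ N, q ∈ d → d = {a,q} := fun d hd hz => block_unique hN hd h1 hz (by simp)
  have hBa' : ∀ d ∈ N, -a ∈ d → d = {-a,-q} := fun d hd hz => block_unique hN hd h2 hz (by simp)
  have hBq' : ∀ d ∈ N, -q ∈ d → d = {-a,-q} := fun d hd hz => block_unique hN hd h2 hz (by simp)
  have hBb : ∀ d ∈ N, b ∈ d → d = {b,p} := fun d hd hz => block_unique hN hd h3 hz (by simp)
  have hBp : ∀ d ∈ N, p ∈ d → d = {b,p} := fun d hd hz => block_unique hN hd h3 hz (by simp)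
  have hBb' : ∀ d ∈ N, -b ∈ d → d = {-b,-p} := fun d hd hz => block_unique hN hd h4 hz (by simp)
  have hBp' : ∀ d ∈ N, -p ∈ d → d = {-b,-p} := fun d hd hz => block_unique hN hd h4 hz (by simp)
  have no_between : ∀ z : ℤ, (z ∈ X ∨ -z ∈ X) → ¬(a < z ∧ z < b) := by
    rintro z hz ⟨hz1, hz2⟩
    have hzX : z ∈ X := by
      rcases hz with h | h
      · exact h
      · exact absurd (hpos _ h) (by omega)
    exact hconsec z hzX ⟨hz1, hz2⟩
  have no_between' : ∀ z : ℤ, (z ∈ X ∨ -z ∈ X) → ¬(-b < z ∧ z < -a) := by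
    rintro z hz ⟨hz1, hz2⟩
    have hz' : -z ∈ X ∨ - -z ∈ X := by rw [neg_neg]; tauto
    exact no_between (-z) hz' ⟨by omega, by omega⟩
  have aux1 : ∀ u v : ℤ, 0 < u → u < p → p < v → v < q → ({u,v} : Finset ℤ) ∈ N → False := by
    intro u v hu hup hpv hvq huv
    rcases lt_trichotomy u a with hcase | rfl | hcase
    · exact hstr ⟨u, v, huv, hu, hcase, by omega⟩
    · have := hBa _ huv (by simp)
      rcases pair_eq_pair_iff'.1 this with ⟨e1, e2⟩ | ⟨e1, e2⟩ <;> omega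
    · have huX : u ∈ X := by
        rcases hN.2.1 _ huv u (by simp) with hh | hh
        · exact hh
        · exact absurd (hpos _ hh) (by omega)
      have hub := hconsec u huX
      rcases lt_trichotomy u b with hcase' | rfl | hcase'
      · omega
      · have := hBb _ huv (by simp)
        rcases pair_eq_pair_iff'.1 this with ⟨e1, e2⟩ | ⟨e1, e2⟩ <;> omega
      · rcases lt_trichotomy u p with hcase'' | rfl | hcase''
        · exact noncross hN (a := b) (b := u) (c := p) (d := v) hcase' hcase'' hpv h3 huv
        · have := hBp _ huv (by simp)
          rcases pair_eq_pair_iff'.1 this with ⟨e1, e2⟩ | ⟨e1, e2⟩ <;> omega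
        · omega
  have aux2 : ∀ u v : ℤ, p < u → u < q → q < v → ({u,v} : Finset ℤ) ∈ N → False := by
    intro u v hpu huq hqv huv
    exact noncross hN (a := a) (b := u) (c := q) (d := v) (by omega) huq hqv h1 huv
  constructor
  · refine ⟨?_, ?_, ?_, ?_, ?_⟩
    · intro d hd
      rcases (memM d).1 hd with ⟨hdN, _⟩ | (rfl | rfl | rfl | rfl)
      · exact hN.1 d hdN
      · exact Finset.card_pair (by omega)
      · exact Finset.card_pair (by omega)
      · exact Finset.card_pair (by omega)
      · exact Finset.card_pair (by omega)
    · intro d hd z hz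
      rcases (memM d).1 hd with ⟨hdN, _⟩ | (rfl | rfl | rfl | rfl) <;>
        [exact hN.2.1 d hdN z hz; skip; skip; skip; skip] <;>
        simp only [Finset.mem_insert, Finset.mem_singleton] at hz <;>
        rcases hz with rfl | rfl <;> simp [haX, hbX, hpX, hqX]
    · intro z hz
      by_cases hza : z = a
      · refine ⟨({a,b} : Finset ℤ), ⟨(memM _).2 (Or.inr (Or.inl rfl)), by simp [hza]⟩, ?_⟩
        rintro d ⟨hd, hzd⟩
        rcases (memM d).1 hd with ⟨hdN, hrem⟩ | (rfl | rfl | rfl | rfl)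
        · exact absurd (Or.inl (hBa d hdN (hza ▸ hzd))) hrem
        · rfl
        · simp only [Finset.mem_insert, Finset.mem_singleton] at hzd; omega
        · simp only [Finset.mem_insert, Finset.mem_singleton] at hzd; omega
        · simp only [Finset.mem_insert, Finset.mem_singleton] at hzd; omega
      by_cases hzb : z = b
      · refine ⟨({a,b} : Finset ℤ), ⟨(memM _).2 (Or.inr (Or.inl rfl)), by simp [hzb]⟩, ?_⟩
        rintro d ⟨hd, hzd⟩
        rcases (memM d).1 hd with ⟨hdN, hrem⟩ | (rfl | rfl | rfl | rfl)
        · exact absurd (Or.inr (Or.inr (Or.inl (hBb d hdN (hzb ▸ hzd))))) hrem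
        · rfl
        · simp only [Finset.mem_insert, Finset.mem_singleton] at hzd; omega
        · simp only [Finset.mem_insert, Finset.mem_singleton] at hzd; omega
        · simp only [Finset.mem_insert, Finset.mem_singleton] at hzd; omega
      by_cases hza' : z = -a
      · refine ⟨({-a,-b} : Finset ℤ), ⟨(memM _).2 (Or.inr (Or.inr (Or.inl rfl))), by simp [hza']⟩, ?_⟩
        rintro d ⟨hd, hzd⟩
        rcases (memM d).1 hd with ⟨hdN, hrem⟩ | (rfl | rfl | rfl | rfl)
        · exact absurd (Or.inr (Or.inl (hBa' d hdN (hza' ▸ hzd)))) hrem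
        · simp only [Finset.mem_insert, Finset.mem_singleton] at hzd; omega
        · rfl
        · simp only [Finset.mem_insert, Finset.mem_singleton] at hzd; omega
        · simp only [Finset.mem_insert, Finset.mem_singleton] at hzd; omega
      by_cases hzb' : z = -b
      · refine ⟨({-a,-b} : Finset ℤ), ⟨(memM _).2 (Or.inr (Or.inr (Or.inl rfl))), by simp [hzb']⟩, ?_⟩
        rintro d ⟨hd, hzd⟩
        rcases (memM d).1 hd with ⟨hdN, hrem⟩ | (rfl | rfl | rfl | rfl)
        · exact absurd (Or.inr (Or.inr (Or.inr (hBb' d hdN (hzb' ▸ hzd))))) hrem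
        · simp only [Finset.mem_insert, Finset.mem_singleton] at hzd; omega
        · rfl
        · simp only [Finset.mem_insert, Finset.mem_singleton] at hzd; omega
        · simp only [Finset.mem_insert, Finset.mem_singleton] at hzd; omega
      by_cases hzp : z = p
      · refine ⟨({p,q} : Finset ℤ), ⟨(memM _).2 (Or.inr (Or.inr (Or.inr (Or.inl rfl)))), by simp [hzp]⟩, ?_⟩
        rintro d ⟨hd, hzd⟩
        rcases (memM d).1 hd with ⟨hdN, hrem⟩ | (rfl | rfl | rfl | rfl)
        · exact absurd (Or.inr (Or.inr (Or.inl (hBp d hdN (hzp ▸ hzd))))) hrem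
        · simp only [Finset.mem_insert, Finset.mem_singleton] at hzd; omega
        · simp only [Finset.mem_insert, Finset.mem_singleton] at hzd; omega
        · rfl
        · simp only [Finset.mem_insert, Finset.mem_singleton] at hzd; omega
      by_cases hzq : z = q
      · refine ⟨({p,q} : Finset ℤ), ⟨(memM _).2 (Or.inr (Or.inr (Or.inr (Or.inl rfl)))), by simp [hzq]⟩, ?_⟩
        rintro d ⟨hd, hzd⟩
        rcases (memM d).1 hd with ⟨hdN, hrem⟩ | (rfl | rfl | rfl | rfl)
        · exact absurd (Or.inl (hBq d hdN (hzq ▸ hzd))) hrem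
        · simp only [Finset.mem_insert, Finset.mem_singleton] at hzd; omega
        · simp only [Finset.mem_insert, Finset.mem_singleton] at hzd; omega
        · rfl
        · simp only [Finset.mem_insert, Finset.mem_singleton] at hzd; omega
      by_cases hzp' : z = -p
      · refine ⟨({-p,-q} : Finset ℤ), ⟨(memM _).2 (Or.inr (Or.inr (Or.inr (Or.inr rfl)))), by simp [hzp']⟩, ?_⟩
        rintro d ⟨hd, hzd⟩
        rcases (memM d).1 hd with ⟨hdN, hrem⟩ | (rfl | rfl | rfl | rfl)
        · exact absurd (Or.inr (Or.inr (Or.inr (hBp' d hdN (hzp' ▸ hzd))))) hrem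
        · simp only [Finset.mem_insert, Finset.mem_singleton] at hzd; omega
        · simp only [Finset.mem_insert, Finset.mem_singleton] at hzd; omega
        · simp only [Finset.mem_insert, Finset.mem_singleton] at hzd; omega
        · rfl
      by_cases hzq' : z = -q
      · refine ⟨({-p,-q} : Finset ℤ), ⟨(memM _).2 (Or.inr (Or.inr (Or.inr (Or.inr rfl)))), by simp [hzq']⟩, ?_⟩
        rintro d ⟨hd, hzd⟩
        rcases (memM d).1 hd with ⟨hdN, hrem⟩ | (rfl | rfl | rfl | rfl)
        · exact absurd (Or.inr (Or.inl (hBq' d hdN (hzq' ▸ hzd)))) hrem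
        · simp only [Finset.mem_insert, Finset.mem_singleton] at hzd; omega
        · simp only [Finset.mem_insert, Finset.mem_singleton] at hzd; omega
        · simp only [Finset.mem_insert, Finset.mem_singleton] at hzd; omega
        · rfl
      · obtain ⟨d0, ⟨hd0N, hzd0⟩, hu⟩ := hN.2.2.1 z hz
        have hd0M : d0 ∈ M := by
          refine (memM _).2 (Or.inl ⟨hd0N, ?_⟩)
          rintro (rfl | rfl | rfl | rfl) <;>
            simp only [Finset.mem_insert, Finset.mem_singleton] at hzd0 <;> tauto
        refine ⟨d0, ⟨hd0M, hzd0⟩, ?_⟩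
        rintro d ⟨hd, hzd⟩
        rcases (memM d).1 hd with ⟨hdN, _⟩ | (rfl | rfl | rfl | rfl) <;>
          [exact block_unique hN hdN hd0N hzd hzd0; skip; skip; skip; skip] <;>
          simp only [Finset.mem_insert, Finset.mem_singleton] at hzd <;> tauto
    · intro d hd
      have img_pair : ∀ u v : ℤ, ({u,v} : Finset ℤ).image (fun x => -x) = {-u,-v} := by
        intro u v; simp
      have img_invol : ∀ s : Finset ℤ, (s.image (fun x : ℤ => -x)).image (fun x : ℤ => -x) = s := by
        intro s; rw [Finset.image_image]; simp
      rcases (memM d).1 hd with ⟨hdN, hrem⟩ | (rfl | rfl | rfl | rfl)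
      · refine (memM _).2 (Or.inl ⟨hN.2.2.2.1 d hdN, ?_⟩)
        rintro (he | he | he | he)
        · have hde := congrArg (Finset.image (fun x : ℤ => -x)) he
          rw [img_invol, img_pair] at hde
          exact hrem (Or.inr (Or.inl hde))
        · have hde := congrArg (Finset.image (fun x : ℤ => -x)) he
          rw [img_invol, img_pair] at hde
          simp only [neg_neg] at hde
          exact hrem (Or.inl hde)
        · have hde := congrArg (Finset.image (fun x : ℤ => -x)) he
          rw [img_invol, img_pair] at hde
          exact hrem (Or.inr (Or.inr (Or.inr hde)))
        · have hde := congrArg (Finset.image (fun x : ℤ => -x)) he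
          rw [img_invol, img_pair] at hde
          simp only [neg_neg] at hde
          exact hrem (Or.inr (Or.inr (Or.inl hde)))
      · rw [img_pair]; exact (memM _).2 (Or.inr (Or.inr (Or.inl rfl)))
      · rw [img_pair]
        refine (memM _).2 (Or.inr (Or.inl ?_)); simp
      · rw [img_pair]; exact (memM _).2 (Or.inr (Or.inr (Or.inr (Or.inr rfl))))
      · rw [img_pair]
        refine (memM _).2 (Or.inr (Or.inr (Or.inr (Or.inl ?_)))); simp
    · rintro ⟨u1, u2, u3, u4, h12, h23, h34, hA, hB⟩
      have hgA : ∀ (d : Finset ℤ), d ∈ N → ∀ z ∈ d, z ∈ X ∨ -z ∈ X := hN.2.1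
      rcases (memM _).1 hA with ⟨hAN, hArem⟩ | hAnew <;>
        rcases (memM _).1 hB with ⟨hBN, hBrem⟩ | hBnew
      · exact noncross hN h12 h23 h34 hAN hBN
      · -- A old, B new
        rcases hBnew with he | he | he | he <;>
          rcases pair_eq_pair_iff'.1 he with ⟨e1, e2⟩ | ⟨e1, e2⟩
        · exact no_between u3 (hgA _ hAN u3 (by simp)) ⟨by omega, by omega⟩
        · omega
        · omega
        · exact no_between' u3 (hgA _ hAN u3 (by simp)) ⟨by omega, by omega⟩
        · -- B = {p,q} : u2 = p, u4 = q, u1 < p < u3 < q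
          rcases lt_trichotomy u1 0 with h0 | h0 | h0
          · have hu3pos : (0:ℤ) < u3 := by omega
            have := sign_pure hN hAN h0 hu3pos
            exact noncross hN (a := u1) (b := a) (c := u3) (d := q)
              (by omega) (by omega) (by omega) hAN h1
          · exact mem_nonzero hpos hN hAN (by simp : u1 ∈ ({u1, u3} : Finset ℤ)) h0
          · exact aux1 u1 u3 h0 (by omega) (by omega) (by omega) hAN
        · omega
        · omega
        · -- B = {-p,-q} : u2 = -q, u4 = -p, u1 < -q, -q < u3 < -p
          have hmir : ({-u3, -u1} : Finset ℤ) ∈ N := by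
            have := mirror_mem hN hAN
            rwa [Finset.pair_comm] at this
          exact aux2 (-u3) (-u1) (by omega) (by omega) (by omega) hmir
      · -- A new, B old
        rcases hAnew with he | he | he | he <;>
          rcases pair_eq_pair_iff'.1 he with ⟨e1, e2⟩ | ⟨e1, e2⟩
        · exact no_between u2 (hgA _ hBN u2 (by simp)) ⟨by omega, by omega⟩
        · omega
        · omega
        · exact no_between' u2 (hgA _ hBN u2 (by simp)) ⟨by omega, by omega⟩
        · -- A = {p,q} : u1 = p, u3 = q, p < u2 < q < u4
          exact aux2 u2 u4 (by omega) (by omega) (by omega) hBN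
        · omega
        · omega
        · -- A = {-p,-q} : u1 = -q, u3 = -p, -q < u2 < -p, u4 > -p
          rcases lt_trichotomy u4 0 with h0 | h0 | h0
          · have hmir : ({-u4, -u2} : Finset ℤ) ∈ N := by
              have := mirror_mem hN hBN
              rwa [Finset.pair_comm] at this
            exact aux1 (-u4) (-u2) (by omega) (by omega) (by omega) (by omega) hmir
          · exact mem_nonzero hpos hN hBN (by simp : u4 ∈ ({u2, u4} : Finset ℤ)) h0
          · have := sign_pure hN hBN (by omega : u2 < 0) h0
            exact noncross hN (a := u2) (b := a) (c := u4) (d := q)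
              (by omega) (by omega) (by omega) hBN h1
      · rcases hAnew with he | he | he | he <;> rcases hBnew with he' | he' | he' | he' <;>
          rcases pair_eq_pair_iff'.1 he with ⟨e1, e2⟩ | ⟨e1, e2⟩ <;>
          rcases pair_eq_pair_iff'.1 he' with ⟨e3, e4⟩ | ⟨e3, e4⟩ <;> omega
  · have hfe : X.filter (fun x => ({-x,x} : Finset ℤ) ∈ M) =
        X.filter (fun x => ({-x,x} : Finset ℤ) ∈ N) := by
      ext x
      simp only [Finset.mem_filter]
      constructor
      · rintro ⟨hxX, hxM⟩
        have hx0 : 0 < x := hpos x hxX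
        refine ⟨hxX, ?_⟩
        rcases (memM _).1 hxM with ⟨hxN, _⟩ | hnew
        · exact hxN
        · exfalso
          rcases hnew with he | he | he | he <;>
            rcases pair_eq_pair_iff'.1 he with ⟨e1, e2⟩ | ⟨e1, e2⟩ <;> omega
      · rintro ⟨hxX, hxN⟩
        have hx0 : 0 < x := hpos x hxX
        refine ⟨hxX, (memM _).2 (Or.inl ⟨hxN, ?_⟩)⟩
        rintro (he | he | he | he) <;>
          rcases pair_eq_pair_iff'.1 he with ⟨e1, e2⟩ | ⟨e1, e2⟩ <;> omega
    rw [trivCount, trivCount, hfe]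

lemma pairUp_struct : ∀ (t : List ℤ) (d : Finset ℤ), d ∈ pairUp t →
    ∃ (i : ℕ) (x y : ℤ) (rest' : List ℤ), t.drop (2*i) = x :: y :: rest' ∧
      (d = {x, y} ∨ d = {-x, -y})
  | [], d, hd => by simp [pairUp] at hd
  | [a], d, hd => by simp [pairUp] at hd
  | a :: b :: rest, d, hd => by
    rw [pairUp, Finset.mem_insert, Finset.mem_insert] at hd
    rcases hd with rfl | rfl | hd
    · exact ⟨0, a, b, rest, rfl, Or.inl rfl⟩
    · exact ⟨0, a, b, rest, rfl, Or.inr rfl⟩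
    · obtain ⟨i, x, y, rest', heq, hcase⟩ := pairUp_struct rest d hd
      refine ⟨i + 1, x, y, rest', ?_, hcase⟩
      have h2 : 2*(i+1) = 2*i + 1 + 1 := by ring
      rw [h2, List.drop_succ_cons, List.drop_succ_cons]
      exact heq

lemma upclosed_eq {X S S' : Finset ℤ} (hS : S ⊆ X) (hS' : S' ⊆ X)
    (hSu : ∀ t ∈ S, ∀ y ∈ X, t ≤ y → y ∈ S) (hS'u : ∀ t ∈ S', ∀ y ∈ X, t ≤ y → y ∈ S')
    (hcard : S.card = S'.card) : S = S' := by
  have key : ∀ (A B : Finset ℤ), A ⊆ X → B ⊆ X →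
      (∀ t ∈ A, ∀ y ∈ X, t ≤ y → y ∈ A) → (∀ t ∈ B, ∀ y ∈ X, t ≤ y → y ∈ B) →
      A.card = B.card → ∀ s ∈ A, s ∉ B → False := by
    intro A B hA hB hAu hBu hc s hsA hsB
    have hBsub : B ⊆ A := by
      intro y hy
      have hsy : s ≤ y := by
        by_contra hlt
        push_neg at hlt
        exact hsB (hBu y hy s (hA hsA) (le_of_lt hlt))
      exact hAu s hsA y (hB hy) hsy
    have : B = A := Finset.eq_of_subset_of_card_le hBsub (le_of_eq hc)
    exact hsB (this ▸ hsA)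
  by_cases hss : S ⊆ S'
  · exact Finset.eq_of_subset_of_card_le hss (le_of_eq hcard.symm)
  · obtain ⟨s, hsS, hsS'⟩ := Finset.not_subset.1 hss
    exact absurd (key S S' hS hS' hSu hS'u hcard s hsS hsS') not_false

lemma no_move_eq {X : Finset ℤ} (hpos : ∀ x ∈ X, 0 < x) {k : ℕ} (hk : k ≤ X.card)
    (heven : Even (X.card - k)) {N : Finset (Finset ℤ)} (hN : IsNCSP X N)
    (htc : trivCount X N = k) (hnomove : ∀ M, ¬ LessDot X M N) : N = Mmin X k := by
  set l := X.sort (· ≤ ·) with hldef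
  set n := X.card - k with hn
  have hlen : l.length = X.card := X.length_sort _
  have hnlen : n ≤ l.length := by omega
  have sorted_lt : ∀ i j : ℕ, ∀ (hi : i < l.length) (hj : j < l.length), i < j →
      l[i] < l[j] :=
    fun i j hi hj hij => List.pairwise_iff_getElem.1 (List.sortedLT_iff_pairwise.1 X.sortedLT_sort) i j hi hj hij
  have mem_idx : ∀ x ∈ X, ∃ i, ∃ h : i < l.length, l[i] = x := by
    intro x hx
    exact List.mem_iff_getElem.1 ((Finset.mem_sort _).2 hx)
  have idx_mem : ∀ (i : ℕ) (h : i < l.length), l[i] ∈ X := by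
    intro i h
    exact (Finset.mem_sort _).1 (List.getElem_mem _)
  set T := X.filter (fun x => ({-x,x} : Finset ℤ) ∈ N) with hT
  have hTX : T ⊆ X := Finset.filter_subset _ _
  have hTcard : T.card = k := htc
  -- the successor of a trivial element is trivial
  have step : ∀ t ∈ T, ∀ y, ConsecIn X t y → y ∈ T := by
    intro t ht y hcons
    have htX : t ∈ X := (Finset.mem_filter.1 ht).1
    have htN : ({-t,t} : Finset ℤ) ∈ N := (Finset.mem_filter.1 ht).2
    have hyX : y ∈ X := hcons.2.1
    have hty : t < y := hcons.2.2.1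
    by_contra hyT
    obtain ⟨w, hwne, hwN⟩ := exists_partner hN (Or.inl hyX)
    have hy0 : 0 < y := hpos _ hyX
    have ht0 : 0 < t := hpos _ htX
    have hw0 : 0 < w := by
      rcases lt_trichotomy w 0 with h0 | h0 | h0
      · exfalso
        have hsp := sign_pure hN (Finset.pair_comm y w ▸ hwN) h0 hy0
        refine hyT (Finset.mem_filter.2 ⟨hyX, ?_⟩)
        rw [show w = -y by omega, Finset.pair_comm y (-y)] at hwN
        exact hwN
      · exfalso; exact mem_nonzero hpos hN hwN (by simp) h0
      · exact h0
    have hwX : w ∈ X := mem_pos hpos hN hwN (by simp) hw0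
    have hwty : y < w := by
      rcases lt_trichotomy w t with h0 | h0 | h0
      · exact absurd (no_straddle hN htN ht0 (Finset.pair_comm y w ▸ hwN) hw0 h0 hty) not_false
      · exfalso
        subst h0
        have := block_unique hN hwN htN (by simp : w ∈ ({y,w} : Finset ℤ)) (by simp)
        rcases pair_eq_pair_iff'.1 this with ⟨e1, e2⟩ | ⟨e1, e2⟩ <;> omega
      · have := hcons.2.2.2 w hwX
        have : ¬(t < w ∧ w < y) := this
        omega
    exact hnomove _ (Or.inl ⟨t, y, w, hcons, hwX, hwty, htN, hwN, mirror_mem hN hwN, rfl⟩)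
  -- T is up-closed in X
  have upc : ∀ y ∈ X, ∀ t ∈ T, t ≤ y → y ∈ T := by
    have key : ∀ m : ℕ, ∀ y ∈ X, ∀ t ∈ T, t ≤ y → (X.filter (fun z => z < y)).card ≤ m →
        y ∈ T := by
      intro m
      induction m with
      | zero =>
        intro y hy t ht hty hcard
        rcases eq_or_lt_of_le hty with rfl | hlt
        · exact ht
        · exfalso
          have htm : t ∈ X.filter (fun z => z < y) := Finset.mem_filter.2 ⟨hTX ht, hlt⟩
          have := Finset.card_pos.2 ⟨t, htm⟩
          omega
      | succ m ih =>
        intro y hy t ht hty hcard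
        rcases eq_or_lt_of_le hty with rfl | hlt
        · exact ht
        · have htP : t ∈ X.filter (fun z => z < y) := Finset.mem_filter.2 ⟨hTX ht, hlt⟩
          set P := X.filter (fun z => z < y) with hP
          have hPne : P.Nonempty := ⟨t, htP⟩
          set p := P.max' hPne with hpdef
          have hpP : p ∈ P := P.max'_mem hPne
          have hpX : p ∈ X := (Finset.mem_filter.1 hpP).1
          have hpy : p < y := (Finset.mem_filter.1 hpP).2
          have htp : t ≤ p := P.le_max' t htP
          have hcons : ConsecIn X p y := by
            refine ⟨hpX, hy, hpy, ?_⟩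
            rintro x hx ⟨hx1, hx2⟩
            have : x ∈ P := Finset.mem_filter.2 ⟨hx, hx2⟩
            have := P.le_max' x this
            omega
          have hsub : X.filter (fun z => z < p) ⊆ P.erase p := by
            intro z hz
            obtain ⟨hzX, hzp⟩ := Finset.mem_filter.1 hz
            exact Finset.mem_erase.2 ⟨by omega, Finset.mem_filter.2 ⟨hzX, by omega⟩⟩
          have hple : (X.filter (fun z => z < p)).card ≤ m := by
            have h1 := Finset.card_le_card hsub
            have h2 := Finset.card_erase_of_mem hpP
            have h3 := Finset.card_pos.2 ⟨p, hpP⟩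
            omega
          exact step p (ih p hpX t ht htp hple) y hcons
    intro y hy t ht hty
    exact key (X.filter (fun z => z < y)).card y hy t ht hty le_rfl
  -- T is the set of the top k elements
  have hdnodup : (l.drop n).Nodup := (X.sort_nodup _).sublist (List.drop_sublist _ _)
  have hdX : (l.drop n).toFinset ⊆ X := by
    intro y hy
    have : y ∈ l := List.mem_of_mem_drop (List.mem_toFinset.1 hy)
    rwa [Finset.mem_sort] at this
  have hdcard : (l.drop n).toFinset.card = k := by
    rw [List.toFinset_card_of_nodup hdnodup, List.length_drop, hlen]
    omega
  have hdup : ∀ t ∈ (l.drop n).toFinset, ∀ y ∈ X, t ≤ y → y ∈ (l.drop n).toFinset := by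
    intro t ht y hy hty
    obtain ⟨i0, hi0, he0⟩ := List.mem_iff_getElem.1 (List.mem_toFinset.1 ht)
    have hi0l : n + i0 < l.length := by
      have := hi0
      simp only [List.length_drop] at this
      omega
    have he0' : l[n + i0] = t := by rw [← he0]; simp
    obtain ⟨iy, hiyl, hiye⟩ := mem_idx y hy
    have hiy_ge : n ≤ iy := by
      by_contra hc
      push_neg at hc
      have hlt : iy < n + i0 := by omega
      have := sorted_lt iy (n + i0) hiyl hi0l hlt
      omega
    refine List.mem_toFinset.2 (List.mem_iff_getElem.2 ⟨iy - n, by simp; omega, ?_⟩)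
    have : (l.drop n)[iy - n]'(by simp; omega) = l[n + (iy - n)]'(by omega) := by simp
    rw [this]
    have : n + (iy - n) = iy := by omega
    rw [← hiye]
    congr 1
  have hTd : T = (l.drop n).toFinset :=
    upclosed_eq hTX hdX (fun t ht y hy hty => upc y hy t ht hty) hdup
      (by rw [hTcard, hdcard])
  have hnotT : ∀ (i : ℕ) (h : i < l.length), i < n → l[i] ∉ T := by
    intro i h hi hiT
    rw [hTd] at hiT
    obtain ⟨i0, hi0, he0⟩ := List.mem_iff_getElem.1 (List.mem_toFinset.1 hiT)
    have hi0l : n + i0 < l.length := by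
      have := hi0
      simp only [List.length_drop] at this
      omega
    have he0' : l[n + i0] = l[i] := by rw [← he0]; simp
    have hlt : l[i] < l[n + i0] := sorted_lt i (n + i0) h hi0l (by omega)
    omega
  -- the first n elements are paired consecutively
  have pairs : ∀ j : ℕ, 2*j+1 < n → ∀ a b : ℤ,
      (∃ h : 2*j < l.length, l[2*j] = a) → (∃ h : 2*j+1 < l.length, l[2*j+1] = b) →
      ({a, b} : Finset ℤ) ∈ N := by
    intro j
    induction j using Nat.strong_induction_on with
    | _ j IH =>
    rintro hj a b ⟨h2j, ha⟩ ⟨h2j1, hb⟩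
    have haX : a ∈ X := ha ▸ idx_mem _ _
    have hbX : b ∈ X := hb ▸ idx_mem _ _
    have ha0 : 0 < a := hpos _ haX
    have hb0 : 0 < b := hpos _ hbX
    have hab : a < b := by
      have := sorted_lt (2*j) (2*j+1) h2j h2j1 (by omega)
      omega
    have hconsab : ConsecIn X a b := by
      refine ⟨haX, hbX, hab, ?_⟩
      rintro x hx ⟨hx1, hx2⟩
      obtain ⟨ix, hixl, hixe⟩ := mem_idx x hx
      rcases lt_trichotomy ix (2*j) with hc | hc | hc
      · have := sorted_lt ix (2*j) hixl h2j hc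
        omega
      · subst hc; omega
      · have := sorted_lt (2*j+1) ix h2j1 hixl (by
          rcases eq_or_lt_of_le (by omega : 2*j+1 ≤ ix) with hc' | hc'
          · subst hc'; omega
          · exact hc')
        omega
    have noBelow : ∀ d ∈ N, ∀ z ∈ d, 0 < z → z < a → ∀ z' ∈ d, 0 < z' → z' < a := by
      intro d hd z hz hz0 hza z' hz' hz'0
      have hzX : z ∈ X := mem_pos hpos hN hd hz hz0
      obtain ⟨iz, hizl, hize⟩ := mem_idx z hzX
      have hizlt : iz < 2*j := by
        by_contra hge
        push_neg at hge
        rcases eq_or_lt_of_le hge with hc | hc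
        · subst hc; omega
        · have := sorted_lt (2*j) iz h2j hizl hc
          omega
      obtain ⟨i0, e, he, hiz⟩ : ∃ i0 e, (e = 0 ∨ e = 1) ∧ iz = 2*i0 + e :=
        ⟨iz/2, iz % 2, by omega, by omega⟩
      have hi0j : i0 < j := by omega
      have hi0n : 2*i0+1 < n := by omega
      have h2i0 : 2*i0 < l.length := by omega
      have h2i01 : 2*i0+1 < l.length := by omega
      have hP : ({l[2*i0], l[2*i0+1]} : Finset ℤ) ∈ N :=
        IH i0 hi0j hi0n _ _ ⟨h2i0, rfl⟩ ⟨h2i01, rfl⟩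
      have hzP : z ∈ ({l[2*i0], l[2*i0+1]} : Finset ℤ) := by
        rcases he with rfl | rfl
        · have hiz' : iz = 2*i0 := by omega
          subst hiz'
          rw [← hize]
          exact Finset.mem_insert_self _ _
        · have hiz' : iz = 2*i0+1 := by omega
          subst hiz'
          rw [← hize]
          exact Finset.mem_insert_of_mem (Finset.mem_singleton_self _)
      have hdP := block_unique hN hd hP hz hzP
      rw [hdP] at hz'
      have e1 : l[2*i0] < a := by
        have := sorted_lt (2*i0) (2*j) h2i0 h2j (by omega)
        omega
      have e2 : l[2*i0+1] < a := by
        have := sorted_lt (2*i0+1) (2*j) h2i01 h2j (by omega)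
        omega
      rcases Finset.mem_insert.1 hz' with rfl | hz''
      · exact e1
      · rw [Finset.mem_singleton] at hz''
        subst hz''
        exact e2
    have hstr : ¬∃ u v : ℤ, ({u,v} : Finset ℤ) ∈ N ∧ 0 < u ∧ u < a ∧ a < v := by
      rintro ⟨u, v, huv, hu0, hua, hav⟩
      have := noBelow _ huv u (by simp) hu0 hua v (by simp) (by omega)
      omega
    have haT : a ∉ T := ha ▸ hnotT (2*j) h2j (by omega)
    have hbT : b ∉ T := hb ▸ hnotT (2*j+1) h2j1 (by omega)
    obtain ⟨qa, hqane, hqaN⟩ := exists_partner hN (Or.inl haX)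
    have hqa0 : 0 < qa := by
      rcases lt_trichotomy qa 0 with h0 | h0 | h0
      · exfalso
        have hsp := sign_pure hN (Finset.pair_comm a qa ▸ hqaN) h0 ha0
        refine haT (Finset.mem_filter.2 ⟨haX, ?_⟩)
        rw [show qa = -a by omega, Finset.pair_comm a (-a)] at hqaN
        exact hqaN
      · exfalso; exact mem_nonzero hpos hN hqaN (by simp) h0
      · exact h0
    have hqaX : qa ∈ X := mem_pos hpos hN hqaN (by simp) hqa0
    have hqa_ge : b ≤ qa := by
      obtain ⟨iq, hiql, hiqe⟩ := mem_idx qa hqaX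
      rcases lt_trichotomy iq (2*j) with hc | hc | hc
      · exfalso
        have hqa_lt : qa < a := by
          have := sorted_lt iq (2*j) hiql h2j hc
          omega
        have := noBelow _ hqaN qa (by simp) hqa0 hqa_lt a (by simp) ha0
        omega
      · exfalso; subst hc; omega
      · rcases eq_or_lt_of_le (by omega : 2*j+1 ≤ iq) with hc' | hc'
        · subst hc'; omega
        · have := sorted_lt (2*j+1) iq h2j1 hiql hc'
          omega
    rcases eq_or_lt_of_le hqa_ge with hqab | hqab
    · rw [hqab]; exact hqaN
    · exfalso
      obtain ⟨pb, hpbne, hpbN⟩ := exists_partner hN (Or.inl hbX)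
      have hpb0 : 0 < pb := by
        rcases lt_trichotomy pb 0 with h0 | h0 | h0
        · exfalso
          have hsp := sign_pure hN (Finset.pair_comm b pb ▸ hpbN) h0 hb0
          refine hbT (Finset.mem_filter.2 ⟨hbX, ?_⟩)
          rw [show pb = -b by omega, Finset.pair_comm b (-b)] at hpbN
          exact hpbN
        · exfalso; exact mem_nonzero hpos hN hpbN (by simp) h0
        · exact h0
      have hpbX : pb ∈ X := mem_pos hpos hN hpbN (by simp) hpb0
      have hpb_ne_a : pb ≠ a := by
        rintro rfl
        have := block_unique hN hpbN hqaN
          (by simp : pb ∈ ({b, pb} : Finset ℤ)) (by simp : pb ∈ ({pb, qa} : Finset ℤ))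
        rcases pair_eq_pair_iff'.1 this with ⟨e1, e2⟩ | ⟨e1, e2⟩ <;> omega
      have hpb_gt : b < pb := by
        obtain ⟨ip, hipl, hipe⟩ := mem_idx pb hpbX
        rcases lt_trichotomy ip (2*j) with hc | hc | hc
        · exfalso
          have hpb_lt : pb < a := by
            have := sorted_lt ip (2*j) hipl h2j hc
            omega
          have := noBelow _ hpbN pb (by simp) hpb0 hpb_lt b (by simp) hb0
          omega
        · exfalso; subst hc; omega
        · rcases eq_or_lt_of_le (by omega : 2*j+1 ≤ ip) with hc' | hc'
          · subst hc'; omega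
          · have := sorted_lt (2*j+1) ip h2j1 hipl hc'
            omega
      have hpbqa : pb ≠ qa := by
        rintro rfl
        have := block_unique hN hpbN hqaN
          (by simp : pb ∈ ({b, pb} : Finset ℤ)) (by simp : pb ∈ ({a, pb} : Finset ℤ))
        rcases pair_eq_pair_iff'.1 this with ⟨e1, e2⟩ | ⟨e1, e2⟩ <;> omega
      have hpb_lt : pb < qa := by
        rcases lt_trichotomy pb qa with hc | hc | hc
        · exact hc
        · exact absurd hc hpbqa
        · exact absurd (noncross hN hab hqab hc hqaN hpbN) not_false
      exact hnomove _ (Or.inr ⟨a, b, pb, qa, hconsab, hpbX, hqaX, hpb_gt, hpb_lt, hqaN,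
        mirror_mem hN hqaN, hpbN, mirror_mem hN hpbN, hstr, rfl⟩)
  -- Mmin ⊆ N
  have hMmin := Mmin_isNCSP X hpos k hk heven
  have htl : (l.take n).length = n := by
    rw [List.length_take]
    omega
  have hMsub : Mmin X k ⊆ N := by
    intro d hd
    rw [Mmin] at hd
    rcases Finset.mem_union.1 hd with hd | hd
    · obtain ⟨i, x, y, rest', hdropEq, hcase⟩ := pairUp_struct _ _ hd
      have hlt2 : 2*i+1 < n := by
        have := congrArg List.length hdropEq
        simp only [List.length_drop, List.length_cons, htl, List.length_take, Finset.length_sort] at this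
        omega
      have hx : l[2*i]'(by omega) = x := by
        have e0 := List.getElem_of_eq hdropEq (i := 0)
        simp at e0
        exact e0 (by omega)
      have hdropEq' : (l.take n).drop (2*i+1) = y :: rest' := by
        have hdd : (l.take n).drop (2*i+1) = ((l.take n).drop (2*i)).drop 1 := by
          rw [List.drop_drop]
        rw [hdd, hdropEq]
        rfl
      have hy : l[2*i+1]'(by omega) = y := by
        have e0 := List.getElem_of_eq hdropEq' (i := 0)
        simp at e0
        exact e0 (by omega) (by omega)
      have hP := pairs i hlt2 x y ⟨by omega, hx⟩ ⟨by omega, hy⟩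
      rcases hcase with rfl | rfl
      · exact hP
      · exact mirror_mem hN hP
    · obtain ⟨x, hx, rfl⟩ := Finset.mem_image.1 hd
      have hxT : x ∈ T := by rw [hTd]; exact hx
      exact (Finset.mem_filter.1 hxT).2
  refine Finset.Subset.antisymm ?_ hMsub
  intro d hd
  obtain ⟨u, v, huv, rfl⟩ := exists_pair (hN.1 d hd)
  have hu : u ∈ ({u,v} : Finset ℤ) := by simp
  have hg := hN.2.1 _ hd u hu
  obtain ⟨d0, ⟨hd0M, hud0⟩, _⟩ := hMmin.2.2.1 u hg
  have heq : ({u,v} : Finset ℤ) = d0 := block_unique hN hd (hMsub hd0M) hu hud0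
  rw [heq]
  exact hd0M

lemma phi_le_of_rtg {X : Finset ℤ} (hpos : ∀ x ∈ X, 0 < x) {A B : Finset (Finset ℤ)}
    (h : Relation.ReflTransGen (LessDot X) A B) : phi A ≤ phi B := by
  induction h with
  | refl => exact le_rfl
  | tail _ hstep ih => exact le_trans ih (le_of_lt (phi_lt hpos hstep))

/-- The transitive closure of `⋖` is a partial order on
`NCSP(X : k)` with unique minimal element `M_min(X : k)`. -/
theorem stmt15 (X : Finset ℤ) (hpos : ∀ x ∈ X, 0 < x) (k : ℕ) (hk : k ≤ X.card)
    (heven : Even (X.card - k)) :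
    (IsNCSP X (Mmin X k) ∧ trivCount X (Mmin X k) = k) ∧
    (∀ M N : Finset (Finset ℤ),
      IsNCSP X M → trivCount X M = k → IsNCSP X N → trivCount X N = k →
      Relation.ReflTransGen (LessDot X) M N → Relation.ReflTransGen (LessDot X) N M →
      M = N) ∧
    (∀ N : Finset (Finset ℤ), IsNCSP X N → trivCount X N = k →
      Relation.ReflTransGen (LessDot X) (Mmin X k) N) := by
  refine ⟨⟨Mmin_isNCSP X hpos k hk heven, Mmin_trivCount X hpos k hk⟩, ?_, ?_⟩
  · intro M N _ _ _ _ hMN hNM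
    by_contra hne
    rcases Relation.ReflTransGen.cases_head hMN with rfl | ⟨c, hstep, hrest⟩
    · exact hne rfl
    · have h1 : phi M < phi N := lt_of_lt_of_le (phi_lt hpos hstep) (phi_le_of_rtg hpos hrest)
      have h2 : phi N ≤ phi M := phi_le_of_rtg hpos hNM
      omega
  · intro N hNncsp hNtc
    have main : ∀ m : ℕ, ∀ N, IsNCSP X N → trivCount X N = k → phi N = m →
        Relation.ReflTransGen (LessDot X) (Mmin X k) N := by
      intro m
      induction m using Nat.strong_induction_on with
      | _ m IH =>
      intro N hNn hNt hphi
      by_cases heq : N = Mmin X k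
      · rw [heq]
      · have hmv : ∃ M, LessDot X M N := by
          by_contra hno
          push_neg at hno
          exact heq (no_move_eq hpos hk heven hNn hNt hno)
        obtain ⟨M, hMN⟩ := hmv
        have hpres : IsNCSP X M ∧ trivCount X M = trivCount X N := by
          rcases hMN with h | h
          · exact move1_preserves hpos hNn h
          · exact move2_preserves hpos hNn h
        have hphiM : phi M < m := hphi ▸ phi_lt hpos hMN
        exact (IH (phi M) hphiM M hpres.1 (by rw [hpres.2, hNt]) rfl).tail hMN
    exact main (phi N) N hNncsp hNtc rfl
end

section
/- Let k ≥ 0 and let ⪅ᵏ be the transitive closure of the word relation u B C A D v ⪅ᵏ u A D B C v, allowed whenever the prefix u has length in k + 2ℕ and A < B < C < D. Then ⪅ᵏ is a graded partial order on any set of words of fixed length n that is closed under it, with rank function given by the number of inversions among the letters in positions k+2, k+4, k+6, … -/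
/-- One step of the word relation `⪅ᵏ`: replace a consecutive subword
`B, C, A, D` starting after a prefix of length in `k + 2ℕ` by `A, D, B, C`,
where `A < B < C < D`. -/
def PrecApproxStep (k : ℕ) (x y : List ℤ) : Prop :=
  ∃ u v : List ℤ, ∃ A B C D : ℤ, A < B ∧ B < C ∧ C < D ∧
    (∃ j : ℕ, u.length = k + 2 * j) ∧
    x = u ++ [B, C, A, D] ++ v ∧ y = u ++ [A, D, B, C] ++ v

/-- The number of inversions of a word. -/
def linv (l : List ℤ) : ℕ :=
  ((Finset.range l.length ×ˢ Finset.range l.length).filter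
    (fun p => p.1 < p.2 ∧ l.getD p.2 0 < l.getD p.1 0)).card

/-- The subword of `w` consisting of the letters in positions
`k+2, k+4, k+6, …` (1-indexed), i.e. 0-indexed positions `k+1, k+3, …`. -/
def evenTail (k : ℕ) (w : List ℤ) : List ℤ :=
  (((List.range w.length).filter
    (fun i => decide (k + 1 ≤ i ∧ (i - (k + 1)) % 2 = 0))).map (fun i => w.getD i 0))

/-- The rank of a word: the number of inversions among the letters in
positions `k+2, k+4, k+6, …`. -/
def rank18 (k : ℕ) (w : List ℤ) : ℕ := linv (evenTail k w)

lemma filter_range_eq (k : ℕ) (L : ℕ) :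
    (List.range L).filter (fun i => decide (k + 1 ≤ i ∧ (i - (k + 1)) % 2 = 0)) =
    (List.range ((L - k) / 2)).map (fun m => k + 1 + 2 * m) := by
  induction L with
  | zero => simp
  | succ L ih =>
    rw [List.range_succ, List.filter_append, ih]
    by_cases hP : k + 1 ≤ L ∧ (L - (k + 1)) % 2 = 0
    · have h2 : (L + 1 - k) / 2 = (L - k) / 2 + 1 := by omega
      have h3 : k + 1 + 2 * ((L - k) / 2) = L := by omega
      rw [h2, List.range_succ, List.map_append]
      simp [List.filter_singleton, hP.1, hP.2, h3, (by omega : k < L)]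
    · have h2 : (L + 1 - k) / 2 = (L - k) / 2 := by omega
      rw [h2]
      simp only [List.filter_singleton]
      rw [decide_eq_false hP]
      simp

lemma getD_map_range (f : ℕ → ℤ) (M i : ℕ) :
    (((List.range M).map f).getD i 0) = if i < M then f i else 0 := by
  rcases Nat.lt_or_ge i M with h | h
  · rw [if_pos h, List.getD_eq_getElem _ _ (by simpa using h)]
    simp [h]
  · rw [if_neg (by omega), List.getD_eq_default _ _ (by simpa using h)]

lemma evenTail_eq (k : ℕ) (w : List ℤ) :
    evenTail k w = (List.range ((w.length - k) / 2)).map (fun m => w.getD (k + 1 + 2 * m) 0) := by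
  rw [evenTail, filter_range_eq, List.map_map]
  rfl

lemma linv_swap (l₁ l₂ : List ℤ) (t : ℕ) (hlen : l₂.length = l₁.length)
    (ht : t + 1 < l₁.length)
    (hval : ∀ i, l₂.getD i 0 = l₁.getD (Equiv.swap t (t + 1) i) 0)
    (hlt : l₁.getD t 0 < l₁.getD (t + 1) 0) :
    linv l₂ = linv l₁ + 1 := by
  classical
  set n := l₁.length with hn
  set σ := Equiv.swap t (t + 1) with hσ
  have hσt : σ t = t + 1 := Equiv.swap_apply_left _ _
  have hσt1 : σ (t + 1) = t := Equiv.swap_apply_right _ _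
  have hσfix : ∀ a : ℕ, a ≠ t → a ≠ t + 1 → σ a = a := fun a h1 h2 =>
    Equiv.swap_apply_of_ne_of_ne h1 h2
  have hσlt : ∀ a b : ℕ, a < b → ¬(a = t ∧ b = t + 1) → σ a < σ b := by
    intro a b hab hne
    by_cases h1 : a = t
    · by_cases h2 : b = t + 1
      · exact absurd ⟨h1, h2⟩ hne
      · rw [h1, hσt, hσfix b (by omega) h2]; omega
    · by_cases h1' : a = t + 1
      · rw [h1', hσt1, hσfix b (by omega) (by omega)]; omega
      · rw [hσfix a h1 h1']
        by_cases h2 : b = t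
        · rw [h2, hσt]; omega
        · by_cases h2' : b = t + 1
          · rw [h2', hσt1]; omega
          · rw [hσfix b h2 h2']; exact hab
  have hσmem : ∀ a : ℕ, σ a < n ↔ a < n := by
    intro a
    by_cases h1 : a = t
    · rw [h1, hσt]; omega
    by_cases h2 : a = t + 1
    · rw [h2, hσt1]; omega
    · rw [hσfix a h1 h2]
  have hσσ : ∀ a : ℕ, σ (σ a) = a := fun a => Equiv.swap_apply_self _ _ _
  have key : (Finset.range n ×ˢ Finset.range n).filter
      (fun p => p.1 < p.2 ∧ l₂.getD p.2 0 < l₂.getD p.1 0)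
      = insert (t, t + 1) (((Finset.range n ×ˢ Finset.range n).filter
      (fun p => p.1 < p.2 ∧ l₁.getD p.2 0 < l₁.getD p.1 0)).image
        (fun p => (σ p.1, σ p.2))) := by
    ext ⟨a, b⟩
    simp only [Finset.mem_insert, Finset.mem_image, Finset.mem_filter, Finset.mem_product,
      Finset.mem_range, Prod.mk.injEq, Prod.exists]
    constructor
    · rintro ⟨⟨ha, hb⟩, hab, hv⟩
      by_cases he : a = t ∧ b = t + 1
      · exact Or.inl ⟨he.1, he.2⟩
      · refine Or.inr ⟨σ a, σ b, ⟨⟨(hσmem a).mpr ha, (hσmem b).mpr hb⟩,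
          hσlt a b hab he, ?_⟩, ?_, ?_⟩
        · rw [hval a, hval b] at hv
          simpa [hσσ] using hv
        · exact hσσ a
        · exact hσσ b
    · rintro (⟨he1, he2⟩ | ⟨a', b', ⟨⟨ha', hb'⟩, hab', hv'⟩, hea, heb⟩)
      · refine ⟨⟨by omega, by omega⟩, by omega, ?_⟩
        rw [he1, he2, hval t, hval (t + 1), hσt, hσt1]
        exact hlt
      · subst hea; subst heb
        have hne' : ¬(a' = t ∧ b' = t + 1) := by
          rintro ⟨rfl, rfl⟩
          exact absurd hv' (lt_asymm hlt)
        refine ⟨⟨(hσmem a').mpr ha', (hσmem b').mpr hb'⟩, hσlt a' b' hab' hne', ?_⟩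
        rw [hval (σ a'), hval (σ b'), hσσ, hσσ]
        exact hv'
  have hinj : Function.Injective (fun p : ℕ × ℕ => ((σ p.1 : ℕ), (σ p.2 : ℕ))) := by
    intro p q h
    simp only [Prod.mk.injEq] at h
    exact Prod.ext (σ.injective h.1) (σ.injective h.2)
  have hnotmem : (t, t + 1) ∉ ((Finset.range n ×ˢ Finset.range n).filter
      (fun p => p.1 < p.2 ∧ l₁.getD p.2 0 < l₁.getD p.1 0)).image
        (fun p => (σ p.1, σ p.2)) := by
    intro hmem
    obtain ⟨⟨a, b⟩, hm, heq⟩ := Finset.mem_image.mp hmem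
    simp only [Prod.mk.injEq] at heq
    have hb : b = t := σ.injective (heq.2.trans hσt.symm)
    have ha : a = t + 1 := σ.injective (heq.1.trans hσt1.symm)
    have := (Finset.mem_filter.mp hm).2.1
    omega
  have h2 : linv l₂ = ((Finset.range n ×ˢ Finset.range n).filter
      (fun p => p.1 < p.2 ∧ l₂.getD p.2 0 < l₂.getD p.1 0)).card := by
    rw [linv, hlen]
  rw [h2, key, Finset.card_insert_of_notMem hnotmem,
    Finset.card_image_of_injective _ hinj, linv]

lemma rank_step {k : ℕ} {x y : List ℤ} (h : PrecApproxStep k x y) :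
    rank18 k y = rank18 k x + 1 := by
  obtain ⟨u, v, A, B, C, D, hAB, hBC, hCD, ⟨j, hu⟩, hx, hy⟩ := h
  subst hx; subst hy
  have hlx : (u ++ [B, C, A, D] ++ v).length = u.length + 4 + v.length := by
    simp; omega
  have hly : (u ++ [A, D, B, C] ++ v).length = u.length + 4 + v.length := by
    simp; omega
  set M := (u.length + 4 + v.length - k) / 2 with hM
  have hMj : j + 2 ≤ M := by omega
  have hgen : ∀ (a b c d : ℤ) (p : ℕ), (u ++ [a, b, c, d] ++ v).getD p 0 =
      if p < u.length then u.getD p 0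
      else (a :: b :: c :: d :: v).getD (p - u.length) 0 := by
    intro a b c d p
    rw [List.append_assoc]
    split
    · exact List.getD_append _ _ _ _ (by assumption)
    · exact List.getD_append_right _ _ _ _ (by omega)
  have htail : ∀ (a b c d : ℤ) (q : ℕ), 4 ≤ q →
      (a :: b :: c :: d :: v).getD q 0 = v.getD (q - 4) 0 := by
    intro a b c d q hq
    obtain ⟨q', rfl⟩ : ∃ q', q = q' + 1 + 1 + 1 + 1 := ⟨q - 4, by omega⟩
    simp [List.getD_cons_succ]
  have hfx : ∀ i, (u ++ [B, C, A, D] ++ v).getD (k + 1 + 2 * i) 0 =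
      if i < j then u.getD (k + 1 + 2 * i) 0
      else if i = j then C
      else if i = j + 1 then D
      else v.getD (2 * i - 2 * j - 3) 0 := by
    intro i
    rw [hgen]
    by_cases h1 : i < j
    · rw [if_pos (by omega), if_pos h1]
    · rw [if_neg (by omega)]
      by_cases h2 : i = j
      · rw [if_neg h1, if_pos h2]
        have e : k + 1 + 2 * i - u.length = 1 := by omega
        rw [e]
        rfl
      · by_cases h3 : i = j + 1
        · rw [if_neg h1, if_neg h2, if_pos h3]
          have e : k + 1 + 2 * i - u.length = 3 := by omega
          rw [e]
          rfl
        · rw [if_neg h1, if_neg h2, if_neg h3]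
          rw [htail _ _ _ _ _ (by omega)]
          congr 1
          omega
  have hfy : ∀ i, (u ++ [A, D, B, C] ++ v).getD (k + 1 + 2 * i) 0 =
      if i < j then u.getD (k + 1 + 2 * i) 0
      else if i = j then D
      else if i = j + 1 then C
      else v.getD (2 * i - 2 * j - 3) 0 := by
    intro i
    rw [hgen]
    by_cases h1 : i < j
    · rw [if_pos (by omega), if_pos h1]
    · rw [if_neg (by omega)]
      by_cases h2 : i = j
      · rw [if_neg h1, if_pos h2]
        have e : k + 1 + 2 * i - u.length = 1 := by omega
        rw [e]
        rfl
      · by_cases h3 : i = j + 1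
        · rw [if_neg h1, if_neg h2, if_pos h3]
          have e : k + 1 + 2 * i - u.length = 3 := by omega
          rw [e]
          rfl
        · rw [if_neg h1, if_neg h2, if_neg h3]
          rw [htail _ _ _ _ _ (by omega)]
          congr 1
          omega
  have hext : evenTail k (u ++ [B, C, A, D] ++ v) =
      (List.range M).map (fun m => (u ++ [B, C, A, D] ++ v).getD (k + 1 + 2 * m) 0) := by
    rw [evenTail_eq, hlx]
  have heyt : evenTail k (u ++ [A, D, B, C] ++ v) =
      (List.range M).map (fun m => (u ++ [A, D, B, C] ++ v).getD (k + 1 + 2 * m) 0) := by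
    rw [evenTail_eq, hly]
  have main := linv_swap (evenTail k (u ++ [B, C, A, D] ++ v))
      (evenTail k (u ++ [A, D, B, C] ++ v)) j ?_ ?_ ?_ ?_
  · exact main
  · rw [hext, heyt]; simp
  · rw [hext]; simp only [List.length_map, List.length_range]; omega
  · intro i
    rw [hext, heyt]
    simp only [getD_map_range]
    by_cases h1 : i = j
    · subst h1
      rw [Equiv.swap_apply_left, if_pos (by omega), if_pos (by omega), hfy, hfx]
      split_ifs <;> first | rfl | (exfalso; omega)
    · by_cases h2 : i = j + 1
      · subst h2
        rw [Equiv.swap_apply_right, if_pos (by omega), if_pos (by omega), hfy, hfx]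
        split_ifs <;> first | rfl | (exfalso; omega)
      · rw [Equiv.swap_apply_of_ne_of_ne h1 h2]
        by_cases hi : i < M
        · rw [if_pos hi, if_pos hi, hfy, hfx]
          by_cases h3 : i < j
          · rw [if_pos h3, if_pos h3]
          · rw [if_neg h3, if_neg h3, if_neg h1, if_neg h1, if_neg h2, if_neg h2]
        · rw [if_neg hi, if_neg hi]
  · rw [hext]
    simp only [getD_map_range]
    rw [if_pos (by omega), if_pos (by omega), hfx, hfx]
    split_ifs <;> first | exact hCD | (exfalso; omega)

/-- `⪅ᵏ` is a graded partial order on any set of words of a fixed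
length `n` (with distinct letters) closed under it, with rank function the
number of inversions among the letters in positions `k+2, k+4, k+6, …`:
the relation is antisymmetric, and each covering step raises the rank by one. -/
theorem stmt18 (k n : ℕ) (E : Set (List ℤ))
    (hlen : ∀ w ∈ E, w.length = n) (hnd : ∀ w ∈ E, w.Nodup)
    (hcl : ∀ x y, PrecApproxStep k x y → (x ∈ E ↔ y ∈ E)) :
    (∀ x ∈ E, ∀ y ∈ E, Relation.ReflTransGen (PrecApproxStep k) x y →
      Relation.ReflTransGen (PrecApproxStep k) y x → x = y) ∧
    (∀ x ∈ E, ∀ y ∈ E, PrecApproxStep k x y → rank18 k y = rank18 k x + 1) := by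
  have mono : ∀ a b : List ℤ, Relation.ReflTransGen (PrecApproxStep k) a b →
      a ≠ b → rank18 k a < rank18 k b := by
    intro a b hab
    induction hab with
    | refl => intro h; exact absurd rfl h
    | @tail b' c hab' hstep ih =>
      intro _
      have hr := rank_step hstep
      rcases eq_or_ne a b' with rfl | hne'
      · omega
      · have := ih hne'
        omega
  constructor
  · intro x _ y _ hxy hyx
    by_contra hne
    exact absurd (lt_trans (mono x y hxy hne) (mono y x hyx (Ne.symm hne)))
      (lt_irrefl _)
  · intro x _ y _ h
    exact rank_step h
end
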